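/- arXiv:1802.00305 — 5 statements merged into one kernel-verified Lean document; each statement's English description precedes it below -/
import Mathlib

section
/- The cyclotomic identity holds: as formal power series in t over the rationals (with q an indeterminate or positive integer), 1/(1 - q t) = prod_{j >= 1} (1/(1 - t^j))^{M_j(q)}, where M_j(q) = (1/j) * sum_{i | j} mu(i) q^{j/i} is the j-th necklace polynomial. -/
open PowerSeries


lemma geom_inv (j : ℕ) (hj : 0 < j) :
    ((1 - (X : PowerSeries ℚ) ^ j)⁻¹) = PowerSeries.mk fun m => if j ∣ m then (1:ℚ) else 0 := by
  symm
  rw [PowerSeries.eq_inv_iff_mul_eq_one]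
  · ext m
    rw [mul_sub, mul_one, map_sub, coeff_mk, PowerSeries.coeff_mul_X_pow']
    rcases Nat.eq_zero_or_pos m with rfl | hm
    · simp [hj.ne', Nat.not_succ_le_zero, hj]
    · rw [PowerSeries.coeff_one, if_neg hm.ne']
      by_cases h : j ∣ m
      · rw [if_pos h, if_pos (Nat.le_of_dvd hm h), coeff_mk,
          if_pos ((Nat.dvd_sub h dvd_rfl))]
        ring
      · rw [if_neg h]
        by_cases h2 : j ≤ m
        · rw [if_pos h2, coeff_mk, if_neg]
          · ring
          · intro hd
            exact h (by have := Nat.dvd_add hd (dvd_refl j); rwa [Nat.sub_add_cancel h2] at this)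
        · rw [if_neg h2]; ring
  · simp [hj.ne']

lemma logderiv_pow (f : PowerSeries ℚ) (hf : constantCoeff (R := ℚ) f ≠ 0) (m : ℕ) :
    d⁄dX ℚ (f ^ m) = f ^ m * ((m : PowerSeries ℚ) * (d⁄dX ℚ f * f⁻¹)) := by
  cases m with
  | zero => simp
  | succ k =>
    rw [Derivation.leibniz_pow]
    have h1 : f * f⁻¹ = 1 := PowerSeries.mul_inv_cancel f hf
    rw [smul_eq_mul, nsmul_eq_mul, Nat.succ_sub_one, Nat.cast_succ]
    linear_combination (-((k:PowerSeries ℚ)+1)) * f ^ k * d⁄dX ℚ f * h1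

lemma logderiv_prod (s : Finset ℕ) (f : ℕ → PowerSeries ℚ) (m : ℕ → ℕ)
    (hf : ∀ i ∈ s, constantCoeff (R := ℚ) (f i) ≠ 0) :
    d⁄dX ℚ (∏ i ∈ s, f i ^ m i)
      = (∏ i ∈ s, f i ^ m i) * ∑ i ∈ s, (m i : PowerSeries ℚ) * (d⁄dX ℚ (f i) * (f i)⁻¹) := by
  induction s using Finset.induction_on with
  | empty => simp
  | insert a s ha ih =>
    rw [Finset.prod_insert ha, Finset.sum_insert ha, Derivation.leibniz,
      logderiv_pow _ (hf a (Finset.mem_insert_self a s)),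
      ih (fun i hi => hf i (Finset.mem_insert_of_mem hi))]
    simp only [smul_eq_mul]
    ring

/-- The cyclotomic identity: as formal power series in `t` over `ℚ`,
`1/(1 - q t) = ∏_{j ≥ 1} (1/(1 - t^j))^{M_j(q)}` where `M_j(q)` is the `j`-th
necklace polynomial, i.e. `j * M_j(q) = ∑_{i ∣ j} μ(i) q^{j/i}`.  Since the factor
for index `j` is `1 + O(t^j)`, the coefficient of `t^n` only involves the factors with
`1 ≤ j ≤ n`, so the identity is stated coefficientwise with a finite product. -/
theorem cyclotomic_identity (q : ℕ) (M : ℕ → ℕ)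
    (hM : ∀ j, 0 < j → (M j : ℚ) * j
      = ∑ i ∈ j.divisors, ((ArithmeticFunction.moebius i : ℤ) : ℚ) * (q : ℚ) ^ (j / i))
    (n : ℕ) :
    PowerSeries.coeff (R := ℚ) n (∏ j ∈ Finset.Icc 1 n, ((1 - (PowerSeries.X : PowerSeries ℚ) ^ j)⁻¹) ^ (M j))
      = PowerSeries.coeff (R := ℚ) n ((1 - PowerSeries.C (R := ℚ) (q : ℚ) * PowerSeries.X)⁻¹) := by
  -- Step 1: Möbius inversion
  have hdiv : ∀ m : ℕ, 0 < m → ∑ j ∈ m.divisors, (M j : ℚ) * j = (q:ℚ)^m := by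
    refine (ArithmeticFunction.sum_eq_iff_sum_smul_moebius_eq
      (f := fun j => (M j : ℚ) * j) (g := fun m => (q:ℚ)^m)).mpr ?_
    intro j hj
    rw [hM j hj,
      Nat.sum_divisorsAntidiagonal (fun i d => (ArithmeticFunction.moebius i) • ((q:ℚ)^d))]
    refine Finset.sum_congr rfl fun i _ => ?_
    rw [zsmul_eq_mul]
  set B : PowerSeries ℚ := 1 - C (R := ℚ) (q:ℚ) * X with hB
  set P : PowerSeries ℚ := ∏ j ∈ Finset.Icc 1 n, (1 - X ^ j) ^ (M j) with hP
  have hc1 : ∀ j : ℕ, 0 < j → constantCoeff (R := ℚ) (1 - (X:PowerSeries ℚ) ^ j) = 1 := by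
    intro j hj; simp [zero_pow hj.ne']
  have hcne : ∀ j ∈ Finset.Icc 1 n, constantCoeff (R := ℚ) (1 - (X:PowerSeries ℚ) ^ j) ≠ 0 := by
    intro j hj; rw [hc1 j (Finset.mem_Icc.mp hj).1]; exact one_ne_zero
  have hPc : constantCoeff (R := ℚ) P = 1 := by
    rw [hP, map_prod]
    exact Finset.prod_eq_one fun j hj => by
      rw [map_pow, hc1 j (Finset.mem_Icc.mp hj).1, one_pow]
  set S : PowerSeries ℚ := ∑ j ∈ Finset.Icc 1 n,
      (M j : PowerSeries ℚ) * (d⁄dX ℚ (1 - X ^ j) * (1 - X ^ j)⁻¹) with hSdef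
  have hDP : d⁄dX ℚ P = P * S := logderiv_prod _ _ _ hcne
  -- coefficients of the terms of S
  have hterm : ∀ j, 0 < j → ∀ m : ℕ,
      coeff (R := ℚ) m ((M j : PowerSeries ℚ) * (d⁄dX ℚ (1 - (X:PowerSeries ℚ) ^ j) * (1 - X ^ j)⁻¹))
        = if j ∣ (m+1) then -((M j : ℚ) * j) else 0 := by
    intro j hj m
    have hD : d⁄dX ℚ (1 - (X:PowerSeries ℚ) ^ j) = -((j : PowerSeries ℚ) * X ^ (j-1)) := by
      rw [map_sub, Derivation.map_one_eq_zero, Derivation.leibniz_pow, derivative_X,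
        smul_eq_mul, mul_one, nsmul_eq_mul, zero_sub]
    have e1 : ((M j : PowerSeries ℚ)) = C (R := ℚ) ((M j : ℚ)) := (map_natCast (C (R := ℚ)) (M j)).symm
    have e2 : ((j : PowerSeries ℚ)) = C (R := ℚ) ((j : ℚ)) := (map_natCast (C (R := ℚ)) j).symm
    have h2 : (M j : PowerSeries ℚ) * (d⁄dX ℚ (1 - (X:PowerSeries ℚ) ^ j) * (1 - X ^ j)⁻¹)
        = C (R := ℚ) (-((M j:ℚ) * j)) * ((PowerSeries.mk fun m => if j ∣ m then (1:ℚ) else 0) * X ^ (j-1)) := by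
      rw [hD, geom_inv j hj, e1, e2, map_neg, map_mul]
      ring
    rw [h2, PowerSeries.coeff_C_mul, PowerSeries.coeff_mul_X_pow']
    have key : (j - 1 ≤ m ∧ j ∣ m - (j-1)) ↔ j ∣ m + 1 := by
      constructor
      · rintro ⟨hle, hd⟩
        have h3 : m + 1 = (m - (j-1)) + j := by omega
        rw [h3]; exact Nat.dvd_add hd dvd_rfl
      · intro hd
        have h1 : j ≤ m + 1 := Nat.le_of_dvd (Nat.succ_pos m) hd
        refine ⟨by omega, ?_⟩
        have h3 : m - (j-1) = (m+1) - j := by omega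
        rw [h3]; exact Nat.dvd_sub hd dvd_rfl
    by_cases hd : j ∣ m + 1
    · obtain ⟨hle, hd2⟩ := key.mpr hd
      rw [if_pos hle, coeff_mk, if_pos hd2, if_pos hd, mul_one]
    · rw [if_neg hd]
      by_cases hle : j - 1 ≤ m
      · rw [if_pos hle, coeff_mk, if_neg (fun hdd => hd (key.mp ⟨hle, hdd⟩)), mul_zero]
      · rw [if_neg hle, mul_zero]
  -- coefficients of S
  have hS : ∀ m : ℕ, m + 1 ≤ n → coeff (R := ℚ) m S = -((q:ℚ)^(m+1)) := by
    intro m hm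
    rw [hSdef, map_sum,
      Finset.sum_congr rfl (fun j hj => hterm j (Finset.mem_Icc.mp hj).1 m)]
    have hfil : (Finset.Icc 1 n).filter (fun j => j ∣ m + 1) = (m+1).divisors := by
      ext j
      simp only [Finset.mem_filter, Finset.mem_Icc, Nat.mem_divisors]
      constructor
      · rintro ⟨⟨h1, h2⟩, h3⟩; exact ⟨h3, Nat.succ_ne_zero m⟩
      · rintro ⟨h1, _⟩
        have hj1 : 1 ≤ j := by
          rcases Nat.eq_zero_or_pos j with rfl | h
          · exact absurd (Nat.eq_zero_of_zero_dvd h1) (Nat.succ_ne_zero m)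
          · exact h
        exact ⟨⟨hj1, le_trans (Nat.le_of_dvd (Nat.succ_pos m) h1) hm⟩, h1⟩
    rw [← Finset.sum_filter, hfil, ← hdiv (m+1) (Nat.succ_pos m)]
    rw [← Finset.sum_neg_distrib]
  -- the key congruence P ≡ B mod X^(n+1)
  have hBcoeff : ∀ m' : ℕ, coeff (R := ℚ) (m'+1) B = (if m' = 0 then -(q:ℚ) else 0) := by
    intro m'
    rw [hB, map_sub, PowerSeries.coeff_one, if_neg (Nat.succ_ne_zero m'), coeff_C_mul,
      PowerSeries.coeff_X]
    cases m' with
    | zero => simp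
    | succ k => simp
  have key : ∀ m : ℕ, m ≤ n → coeff (R := ℚ) m P = coeff (R := ℚ) m B := by
    intro m
    induction m using Nat.strong_induction_on with
    | _ m IH =>
      intro hm
      cases m with
      | zero =>
        rw [coeff_zero_eq_constantCoeff, hPc, hB]
        simp
      | succ m' =>
        have hd : coeff (R := ℚ) m' (d⁄dX ℚ P) = coeff (R := ℚ) (m'+1) P * (m'+1) :=
          PowerSeries.coeff_derivative P m'
        have hPS : coeff (R := ℚ) m' (P * S) = coeff (R := ℚ) m' (B * S) := by
          rw [PowerSeries.coeff_mul, PowerSeries.coeff_mul]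
          refine Finset.sum_congr rfl fun x hx => ?_
          have hx1 : x.1 + x.2 = m' := Finset.HasAntidiagonal.mem_antidiagonal.mp hx
          rw [IH x.1 (by omega) (by omega)]
        have hBS : coeff (R := ℚ) m' (B * S) = (if m' = 0 then -(q:ℚ) else 0) := by
          rw [hB, sub_mul, one_mul, map_sub, mul_assoc, coeff_C_mul]
          cases m' with
          | zero =>
            rw [if_pos rfl, hS 0 hm, coeff_zero_eq_constantCoeff, map_mul, constantCoeff_X,
              zero_mul, mul_zero, pow_one, sub_zero]
          | succ k =>
            rw [if_neg (Nat.succ_ne_zero k), PowerSeries.coeff_succ_X_mul, hS (k+1) hm,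
              hS k (by omega)]
            ring
        have hval : coeff (R := ℚ) (m'+1) P * ((m' : ℚ)+1) = (if m' = 0 then -(q:ℚ) else 0) := by
          push_cast at hd
          rw [← hd, hDP, hPS, hBS]
        rw [hBcoeff m']
        have hcast : (if m' = 0 then -(q:ℚ) else 0) = (if m' = 0 then -(q:ℚ) else 0) * ((m':ℚ)+1) := by
          cases m' with
          | zero => simp
          | succ k => simp
        have hne : ((m' : ℚ) + 1) ≠ 0 := by positivity
        refine mul_right_cancel₀ hne ?_
        rw [hval, ← hcast]
  -- pass to inverses
  have hProd : (∏ j ∈ Finset.Icc 1 n, ((1 - (X:PowerSeries ℚ) ^ j)⁻¹) ^ (M j)) = P⁻¹ := by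
    rw [PowerSeries.eq_inv_iff_mul_eq_one (by rw [hPc]; exact one_ne_zero), hP,
      ← Finset.prod_mul_distrib]
    exact Finset.prod_eq_one fun j hj => by
      rw [← mul_pow, PowerSeries.inv_mul_cancel _ (hcne j hj), one_pow]
  have hBc : constantCoeff (R := ℚ) B ≠ 0 := by simp [hB]
  have heq : P⁻¹ - B⁻¹ = P⁻¹ * ((B - P) * B⁻¹) := by
    have h1 : P * P⁻¹ = 1 := PowerSeries.mul_inv_cancel _ (by rw [hPc]; exact one_ne_zero)
    have h2 : B * B⁻¹ = 1 := PowerSeries.mul_inv_cancel _ hBc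
    linear_combination B⁻¹ * h1 - P⁻¹ * h2
  have hdvd : (X : PowerSeries ℚ)^(n+1) ∣ (B - P) := by
    rw [PowerSeries.X_pow_dvd_iff]
    intro m hm
    rw [map_sub, key m (Nat.lt_succ_iff.mp hm), sub_self]
  have hzero : coeff (R := ℚ) n (P⁻¹ - B⁻¹) = 0 := by
    rw [heq]
    exact PowerSeries.X_pow_dvd_iff.mp
      (Dvd.dvd.mul_left (Dvd.dvd.mul_right hdvd _) _) n (Nat.lt_succ_self n)
  rw [hProd]
  rw [map_sub] at hzero
  linarith
end

section
/- For a prime power q and positive integer d, the probability that a uniformly random monic degree d polynomial over F_q has even factorization type equals (1/2)(1 + q^{-floor(d/2)}); that is, the number of monic degree d polynomials f with sgn(f) = 1 is (q^d + q^{d - floor(d/2)})/2. -/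
open Polynomial UniqueFactorizationMonoid Finset

set_option linter.unusedSectionVars false
set_option linter.unnecessarySimpa false
set_option maxHeartbeats 1000000

section Aux

variable {F : Type*} [Field F] [Fintype F] [DecidableEq F]

lemma coeff_sumc (d : ℕ) (c : Fin d → F) {i : ℕ} (hi : i < d) :
    (∑ j : Fin d, C (c j) * X ^ (j : ℕ)).coeff i = c ⟨i, hi⟩ := by
  rw [finset_sum_coeff]
  rw [Finset.sum_eq_single (⟨i, hi⟩ : Fin d)]
  · simp
  · intro j _ hj
    simp only [coeff_C_mul, coeff_X_pow]
    rw [if_neg, mul_zero]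
    exact fun h => hj (by ext; simp [h])
  · simp

lemma monicdeg (d : ℕ) (c : Fin d → F) : (X ^ d + ∑ i : Fin d, C (c i) * X ^ (i : ℕ)).Monic ∧
    (X ^ d + ∑ i : Fin d, C (c i) * X ^ (i : ℕ)).natDegree = d := by
  have h := degree_sum_fin_lt c
  have hdeg : (X ^ d + ∑ i : Fin d, C (c i) * X ^ (i : ℕ)).degree = (d : WithBot ℕ) := by
    rw [add_comm, degree_add_eq_right_of_degree_lt (by simpa using h), degree_X_pow]
  exact ⟨monic_X_pow_add h, natDegree_eq_of_degree_eq_some hdeg⟩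

lemma eq_sum_repr {d : ℕ} {f : F[X]} (hm : f.Monic) (hdeg : f.natDegree = d) :
    X ^ d + ∑ i : Fin d, C (f.coeff i) * X ^ (i : ℕ) = f := by
  conv_rhs => rw [f.as_sum_range' (d+1) (by omega)]
  rw [Finset.sum_range_succ, ← hdeg, hm.coeff_natDegree, hdeg, add_comm]
  congr 1
  · rw [Fin.sum_univ_eq_sum_range (fun i => C (f.coeff i) * X ^ i)]
    exact Finset.sum_congr rfl fun i _ => by rw [C_mul_X_pow_eq_monomial]
  · simp [monomial_one_right_eq_X_pow]

variable (F) in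
noncomputable def Mfin (d : ℕ) : Finset F[X] :=
  (Finset.univ : Finset (Fin d → F)).image
    (fun c => X ^ d + ∑ i : Fin d, C (c i) * X ^ (i : ℕ))

lemma mem_Mfin {d : ℕ} {f : F[X]} : f ∈ Mfin F d ↔ f.Monic ∧ f.natDegree = d := by
  simp only [Mfin, Finset.mem_image]
  constructor
  · rintro ⟨c, -, rfl⟩; exact monicdeg d c
  · rintro ⟨hm, hdeg⟩
    exact ⟨fun i => f.coeff i, Finset.mem_univ _, eq_sum_repr hm hdeg⟩

lemma card_Mfin (d : ℕ) : (Mfin F d).card = Fintype.card F ^ d := by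
  rw [Mfin, Finset.card_image_of_injective _ ?_, Finset.card_univ, Fintype.card_fun,
    Fintype.card_fin]
  intro c c' h
  have h' := add_left_cancel h
  funext i
  have := congrArg (fun p => Polynomial.coeff p (i : ℕ)) h'
  simpa [coeff_sumc d c i.2, coeff_sumc d c' i.2] using this

noncomputable def Om (f : F[X]) : ℕ := Multiset.card (normalizedFactors f)

lemma monic_of_normalized_factor {f p : F[X]} (hp : p ∈ normalizedFactors f) : p.Monic := by
  have h1 := normalize_normalized_factor p hp
  have h2 := (prime_of_normalized_factor p hp).ne_zero
  rw [← h1]; exact monic_normalize h2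

lemma prod_nf_monic {f : F[X]} (hm : f.Monic) : (normalizedFactors f).prod = f := by
  have h1 : (normalizedFactors f).prod.Monic := by
    have := monic_multiset_prod_of_monic (normalizedFactors f) id
      (fun p hp => monic_of_normalized_factor hp)
    simpa using this
  exact eq_of_monic_of_associated h1 hm (prod_normalizedFactors hm.ne_zero)

lemma Om_le_natDegree {f : F[X]} (hm : f.Monic) : Om f ≤ f.natDegree := by
  conv_rhs => rw [← prod_nf_monic hm]
  rw [natDegree_multiset_prod_of_monic _ fun p hp => monic_of_normalized_factor hp]
  have h : ∀ x ∈ Multiset.map natDegree (normalizedFactors f), 1 ≤ x := by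
    intro x hx
    obtain ⟨p, hp, rfl⟩ := Multiset.mem_map.1 hx
    exact (irreducible_of_normalized_factor p hp).natDegree_pos
  have := Multiset.card_nsmul_le_sum h
  simpa [Om] using this

lemma Om_mul {a b : F[X]} (ha : a ≠ 0) (hb : b ≠ 0) : Om (a * b) = Om a + Om b := by
  simp [Om, normalizedFactors_mul ha hb]

lemma Om_sq (a : F[X]) : Om (a ^ 2) = 2 * Om a := by
  simp [Om, normalizedFactors_pow, Multiset.card_nsmul, two_mul]

lemma nf_prod_primes {s : Multiset F[X]} (h : ∀ p ∈ s, Prime p) (hn : ∀ p ∈ s, normalize p = p) :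
    normalizedFactors s.prod = s := by
  induction s using Multiset.induction with
  | empty => simpa using normalizedFactors_one
  | cons a t IH =>
    rw [Multiset.prod_cons, normalizedFactors_mul (h a (by simp)).ne_zero
      (Multiset.prod_ne_zero fun h0 => (h 0 (Multiset.mem_cons_of_mem h0)).ne_zero rfl),
      normalizedFactors_irreducible (h a (by simp)).irreducible, hn a (by simp),
      IH (fun p hp => h p (Multiset.mem_cons_of_mem hp))
        (fun p hp => hn p (Multiset.mem_cons_of_mem hp))]
    rfl

noncomputable def SFD (f : F[X]) : Finset F[X] :=
  ((normalizedFactors f).toFinset.powerset).image (fun T => T.prod id)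

lemma nf_subset_prod {f : F[X]} {T : Finset F[X]}
    (hT : T ⊆ (normalizedFactors f).toFinset) :
    normalizedFactors (T.prod id) = T.val := by
  rw [Finset.prod_eq_multiset_prod]
  simp only [Multiset.map_id]
  refine nf_prod_primes (fun p hp => ?_) (fun p hp => ?_)
  · exact prime_of_normalized_factor p (by simpa [-toFinset_normalizedFactors] using hT hp)
  · exact normalize_normalized_factor p (by simpa [-toFinset_normalizedFactors] using hT hp)

lemma mem_SFD {f g : F[X]} (hf : f.Monic) :
    g ∈ SFD f ↔ g.Monic ∧ Squarefree g ∧ g ∣ f := by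
  constructor
  · rintro hg
    simp only [SFD, Finset.mem_image, Finset.mem_powerset] at hg
    obtain ⟨T, hT, rfl⟩ := hg
    have hmon : (T.prod id).Monic :=
      monic_prod_of_monic _ _ fun p hp => monic_of_normalized_factor (by simpa [-toFinset_normalizedFactors] using hT hp)
    refine ⟨hmon, ?_, ?_⟩
    · rw [squarefree_iff_nodup_normalizedFactors hmon.ne_zero, nf_subset_prod hT]
      exact T.nodup
    · have hle : T.val ≤ normalizedFactors f := by
        refine Multiset.le_iff_count.2 fun a => ?_
        rw [Multiset.count_eq_of_nodup T.nodup]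
        split
        · next h =>
            have h2 : a ∈ (normalizedFactors f).toFinset := hT h
            exact Multiset.count_pos.2 (by simpa [-toFinset_normalizedFactors] using h2)
        · next h => omega
      calc T.prod id = T.val.prod := by rw [Finset.prod_eq_multiset_prod]; simp
        _ ∣ (normalizedFactors f).prod := Multiset.prod_dvd_prod_of_le hle
        _ = f := prod_nf_monic hf
  · rintro ⟨hm, hsf, hdvd⟩
    simp only [SFD, Finset.mem_image, Finset.mem_powerset]
    refine ⟨(normalizedFactors g).toFinset, ?_, ?_⟩
    · intro p hp
      simp only [Multiset.mem_toFinset] at hp ⊢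
      exact Multiset.mem_of_le ((dvd_iff_normalizedFactors_le_normalizedFactors
        hm.ne_zero hf.ne_zero).1 hdvd) hp
    · have hnodup : (normalizedFactors g).Nodup :=
        (squarefree_iff_nodup_normalizedFactors hm.ne_zero).1 hsf
      rw [Finset.prod_eq_multiset_prod]
      simp only [Multiset.map_id]
      rw [Multiset.toFinset_val, hnodup.dedup]
      exact prod_nf_monic hm

lemma sum_SFD_eq_zero {f : F[X]} (hf : f.Monic) (hdeg : 0 < f.natDegree) :
    ∑ g ∈ SFD f, (-1 : ℤ) ^ Om g = 0 := by
  rw [SFD, Finset.sum_image ?inj]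
  case inj =>
    intro T hT T' hT' h
    simp only [Finset.mem_coe, Finset.mem_powerset] at hT hT'
    have := nf_subset_prod hT ▸ nf_subset_prod hT' ▸ congrArg normalizedFactors h
    exact Finset.val_injective this
  have : ∀ T ∈ (normalizedFactors f).toFinset.powerset, (-1 : ℤ) ^ Om (T.prod id) = (-1) ^ T.card := by
    intro T hT
    rw [Om, nf_subset_prod (Finset.mem_powerset.1 hT)]
    rfl
  rw [Finset.sum_congr rfl this]
  apply Finset.sum_powerset_neg_one_pow_card_of_nonempty
  rw [Finset.nonempty_iff_ne_empty]
  intro h0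
  have hnf : normalizedFactors f = 0 := by
    have := congrArg Finset.val h0
    simpa [Multiset.dedup_eq_zero, -toFinset_normalizedFactors] using this
  have h1 : f = 1 := by rw [← prod_nf_monic hf, hnf, Multiset.prod_zero]
  simp [h1] at hdeg

variable (F) in
open scoped Classical in
noncomputable def SF (k : ℕ) : Finset F[X] := (Mfin F k).filter Squarefree

variable (F) in
noncomputable def MU (k : ℕ) : ℤ := ∑ s ∈ SF F k, (-1 : ℤ) ^ Om s

lemma mem_SF {k : ℕ} {g : F[X]} : g ∈ SF F k ↔ (g.Monic ∧ g.natDegree = k) ∧ Squarefree g := by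
  classical
  simp [SF, mem_Mfin, Finset.mem_filter]

lemma conv_B {m : ℕ} (hm : 0 < m) :
    ∑ k ∈ Finset.range (m + 1), MU F k * (Fintype.card F : ℤ) ^ (m - k) = 0 := by
  have step1 : ∀ k, MU F k * (Fintype.card F : ℤ) ^ (m - k)
      = ∑ p ∈ (SF F k) ×ˢ (Mfin F (m - k)), (-1 : ℤ) ^ Om p.1 := by
    intro k
    rw [Finset.sum_product]
    simp only [Finset.sum_const, nsmul_eq_mul, mul_comm]
    rw [MU, Finset.sum_mul]
    congr 1
    ext g
    rw [card_Mfin, mul_comm]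
    push_cast
    ring
  rw [Finset.sum_congr rfl fun k _ => step1 k, Finset.sum_sigma']
  rw [Finset.sum_bij (t := (Mfin F m).sigma (fun f => SFD f))
    (i := fun x _ => (⟨x.2.1 * x.2.2, x.2.1⟩ : Σ _ : F[X], F[X]))
    (g := fun y => (-1 : ℤ) ^ Om y.2)]
  · rw [Finset.sum_sigma]
    apply Finset.sum_eq_zero
    intro f hf
    rw [mem_Mfin] at hf
    exact sum_SFD_eq_zero hf.1 (by omega)
  · -- membership
    rintro ⟨k, g, h⟩ hx
    simp only [Finset.mem_sigma, Finset.mem_range, Finset.mem_product] at hx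
    obtain ⟨hk, hg, hh⟩ := hx
    rw [mem_SF] at hg
    rw [mem_Mfin] at hh
    obtain ⟨⟨hgm, hgd⟩, hgsf⟩ := hg
    obtain ⟨hhm, hhd⟩ := hh
    have hmul : (g * h).Monic := hgm.mul hhm
    simp only [Finset.mem_sigma]
    constructor
    · rw [mem_Mfin]
      exact ⟨hmul, by rw [hgm.natDegree_mul hhm, hgd, hhd]; omega⟩
    · rw [mem_SFD hmul]
      exact ⟨hgm, hgsf, dvd_mul_right g h⟩
  · -- injectivity
    rintro ⟨k, g, h⟩ hx ⟨k', g', h'⟩ hx' heq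
    simp only [Sigma.mk.inj_iff, heq_eq_eq, Prod.mk.injEq] at heq
    obtain ⟨h1, h2⟩ := heq
    have hg : g = g' := h2
    subst hg
    simp only [Finset.mem_sigma, Finset.mem_range, Finset.mem_product, mem_SF] at hx hx'
    have hk : k = k' := by rw [← hx.2.1.1.2, ← hx'.2.1.1.2]
    have hgne : g ≠ 0 := hx.2.1.1.1.ne_zero
    have hh : h = h' := mul_left_cancel₀ hgne h1
    subst hk; subst hh; rfl
  · -- surjectivity
    rintro ⟨f, g⟩ hy
    simp only [Finset.mem_sigma] at hy
    obtain ⟨hf, hg⟩ := hy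
    rw [mem_Mfin] at hf
    rw [mem_SFD hf.1] at hg
    obtain ⟨hgm, hgsf, hgdvd⟩ := hg
    obtain ⟨h, rfl⟩ := hgdvd
    have hhm : h.Monic := hgm.of_mul_monic_left hf.1
    refine ⟨⟨g.natDegree, g, h⟩, ?_, rfl⟩
    have hdeg : g.natDegree + h.natDegree = m := by
      rw [← hgm.natDegree_mul hhm, hf.2]
    refine Finset.mem_sigma.2 ⟨Finset.mem_range.2 ?_, Finset.mem_product.2 ⟨mem_SF.2 ⟨⟨hgm, rfl⟩, hgsf⟩,
      mem_Mfin.2 ⟨hhm, ?_⟩⟩⟩ <;> simp only [] <;> omega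
  · rintro ⟨k, g, h⟩ _
    rfl

lemma MU_zero : MU F 0 = 1 := by
  have h : SF F 0 = {1} := by
    ext g
    rw [mem_SF, Finset.mem_singleton]
    constructor
    · rintro ⟨⟨hm, hd⟩, -⟩; exact hm.natDegree_eq_zero.1 hd
    · rintro rfl; exact ⟨⟨monic_one, natDegree_one⟩, squarefree_one⟩
  rw [MU, h, Finset.sum_singleton]
  simp [Om, normalizedFactors_one]

lemma MU_one : MU F 1 = -(Fintype.card F : ℤ) := by
  have hirr : ∀ g : F[X], g.Monic → g.natDegree = 1 → Irreducible g := by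
    intro g hm hd
    apply irreducible_of_degree_eq_one
    rw [degree_eq_natDegree hm.ne_zero, hd]; rfl
  have h : SF F 1 = Mfin F 1 := by
    ext g
    rw [mem_SF, mem_Mfin]
    refine ⟨fun h => h.1, fun h => ⟨h, (hirr g h.1 h.2).squarefree⟩⟩
  have hOm : ∀ g ∈ Mfin F 1, (-1 : ℤ) ^ Om g = -1 := by
    intro g hg
    rw [mem_Mfin] at hg
    have : Om g = 1 := by
      rw [Om, normalizedFactors_irreducible (hirr g hg.1 hg.2)]
      rfl
    rw [this, pow_one]
  rw [MU, h, Finset.sum_congr rfl hOm, Finset.sum_const, card_Mfin]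
  simp

lemma MU_eq_zero {m : ℕ} (hm : 2 ≤ m) : MU F m = 0 := by
  have h1 := conv_B (F := F) (m := m) (by omega)
  have h2 := conv_B (F := F) (m := m - 1) (by omega)
  rw [Finset.sum_range_succ] at h1
  have key : ∑ k ∈ Finset.range m, MU F k * (Fintype.card F : ℤ) ^ (m - k)
      = (Fintype.card F : ℤ) * ∑ k ∈ Finset.range m, MU F k * (Fintype.card F : ℤ) ^ (m - 1 - k) := by
    rw [Finset.mul_sum]
    refine Finset.sum_congr rfl fun k hk => ?_
    rw [Finset.mem_range] at hk
    have : m - k = (m - 1 - k) + 1 := by omega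
    rw [this, pow_succ]; ring
  have hm1 : m - 1 + 1 = m := by omega
  rw [hm1] at h2
  rw [key, h2, mul_zero, zero_add, Nat.sub_self, pow_zero, mul_one] at h1
  exact h1

lemma exists_sq : ∀ d : ℕ, ∀ f : F[X], f.Monic → f.natDegree = d →
    ∃ g s : F[X], g.Monic ∧ s.Monic ∧ Squarefree s ∧ f = g ^ 2 * s := by
  intro d
  induction d using Nat.strong_induction_on with
  | _ d IH =>
    intro f hm hdeg
    by_cases hsf : Squarefree f
    · exact ⟨1, f, monic_one, hm, hsf, by ring⟩
    · rw [Squarefree] at hsf; push_neg at hsf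
      obtain ⟨x, hxd, hxu⟩ := hsf
      have hx0 : x ≠ 0 := by
        rintro rfl
        exact hm.ne_zero (zero_dvd_iff.1 (by simpa using hxd))
      set p := normalize x with hp
      have hpm : p.Monic := monic_normalize hx0
      have hassoc : Associated x p := (normalize_associated x).symm
      have hppdvd : p ^ 2 ∣ f := by
        have : Associated (x * x) (p * p) := Associated.mul_mul hassoc hassoc
        rw [sq]
        exact this.symm.dvd.trans hxd
      obtain ⟨h, hfh⟩ := hppdvd
      have hp2m : (p ^ 2).Monic := hpm.pow 2
      have hhm : h.Monic := hp2m.of_mul_monic_left (hfh ▸ hm)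
      have hpd : 1 ≤ p.natDegree := by
        rcases Nat.eq_zero_or_pos p.natDegree with h0 | h1
        · exfalso
          apply hxu
          apply hassoc.symm.isUnit
          rw [hpm.natDegree_eq_zero.1 h0]
          exact isUnit_one
        · exact h1
      have hdegh : h.natDegree < d := by
        have := hp2m.natDegree_mul hhm
        rw [← hfh, hdeg] at this
        have h2 : (p ^ 2).natDegree = 2 * p.natDegree := by
          simpa [two_mul] using hpm.natDegree_pow 2
        omega
      obtain ⟨g, s, hgm, hsm, hss, rfl⟩ := IH h.natDegree hdegh h hhm rfl
      exact ⟨p * g, s, hpm.mul hgm, hsm, hss, by rw [hfh]; ring⟩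

lemma sq_decomp_unique {g s g' s' : F[X]} (hg : g.Monic) (hs : s.Monic) (hss : Squarefree s)
    (hg' : g'.Monic) (hs' : s'.Monic) (hss' : Squarefree s')
    (h : g ^ 2 * s = g' ^ 2 * s') : g = g' ∧ s = s' := by
  have hnf : ∀ (a b : F[X]), a.Monic → b.Monic →
      normalizedFactors (a ^ 2 * b) = 2 • normalizedFactors a + normalizedFactors b := by
    intro a b ha hb
    rw [normalizedFactors_mul (pow_ne_zero 2 ha.ne_zero) hb.ne_zero, normalizedFactors_pow]
  have hEq : 2 • normalizedFactors g + normalizedFactors s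
      = 2 • normalizedFactors g' + normalizedFactors s' := by
    rw [← hnf g s hg hs, ← hnf g' s' hg' hs', h]
  have hc : ∀ p : F[X], Multiset.count p (normalizedFactors g) = Multiset.count p (normalizedFactors g')
      ∧ Multiset.count p (normalizedFactors s) = Multiset.count p (normalizedFactors s') := by
    intro p
    have h1 := congrArg (Multiset.count p) hEq
    simp only [Multiset.count_add, Multiset.count_nsmul] at h1
    have hcs : Multiset.count p (normalizedFactors s) ≤ 1 :=
      Multiset.nodup_iff_count_le_one.1
        ((squarefree_iff_nodup_normalizedFactors hs.ne_zero).1 hss) p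
    have hcs' : Multiset.count p (normalizedFactors s') ≤ 1 :=
      Multiset.nodup_iff_count_le_one.1
        ((squarefree_iff_nodup_normalizedFactors hs'.ne_zero).1 hss') p
    omega
  have hgnf : normalizedFactors g = normalizedFactors g' := Multiset.ext.2 fun p => (hc p).1
  have hsnf : normalizedFactors s = normalizedFactors s' := Multiset.ext.2 fun p => (hc p).2
  constructor
  · rw [← prod_nf_monic hg, ← prod_nf_monic hg', hgnf]
  · rw [← prod_nf_monic hs, ← prod_nf_monic hs', hsnf]

lemma T_eq (d : ℕ) : ∑ f ∈ Mfin F d, (-1 : ℤ) ^ Om f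
    = ∑ k ∈ Finset.range (d / 2 + 1), (Fintype.card F : ℤ) ^ k * MU F (d - 2 * k) := by
  have step1 : ∀ k, (Fintype.card F : ℤ) ^ k * MU F (d - 2 * k)
      = ∑ p ∈ (Mfin F k) ×ˢ (SF F (d - 2 * k)), (-1 : ℤ) ^ Om p.2 := by
    intro k
    rw [Finset.sum_product]
    have h2 : ∀ x ∈ Mfin F k, ∑ y ∈ SF F (d - 2 * k), (-1 : ℤ) ^ Om (x, y).2 = MU F (d - 2 * k) :=
      fun x _ => rfl
    rw [Finset.sum_congr rfl h2, Finset.sum_const, card_Mfin, nsmul_eq_mul]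
    push_cast
    ring
  rw [Finset.sum_congr rfl fun k _ => step1 k, Finset.sum_sigma']
  symm
  refine Finset.sum_bij (fun (x : Σ _ : ℕ, F[X] × F[X]) _ => x.2.1 ^ 2 * x.2.2) ?_ ?_ ?_ ?_
  · rintro ⟨k, g, s⟩ hx
    simp only [Finset.mem_sigma, Finset.mem_range, Finset.mem_product] at hx
    obtain ⟨hk, hg, hs⟩ := hx
    rw [mem_Mfin] at hg
    rw [mem_SF] at hs
    have hmul : (g ^ 2 * s).Monic := (hg.1.pow 2).mul hs.1.1
    rw [mem_Mfin]
    refine ⟨hmul, ?_⟩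
    rw [(hg.1.pow 2).natDegree_mul hs.1.1, hg.1.natDegree_pow, hg.2, hs.1.2]
    omega
  · rintro ⟨k, g, s⟩ hx ⟨k', g', s'⟩ hx' heq
    simp only [Finset.mem_sigma, Finset.mem_range, Finset.mem_product, mem_Mfin, mem_SF]
      at hx hx'
    obtain ⟨hgg, hss⟩ := sq_decomp_unique hx.2.1.1 hx.2.2.1.1 hx.2.2.2
      hx'.2.1.1 hx'.2.2.1.1 hx'.2.2.2 heq
    have hk : k = k' := by rw [← hx.2.1.2, ← hx'.2.1.2, hgg]
    subst hk; subst hgg; subst hss; rfl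
  · intro f hf
    rw [mem_Mfin] at hf
    obtain ⟨g, s, hgm, hsm, hss, hfe⟩ := exists_sq d f hf.1 hf.2
    have hdeg : 2 * g.natDegree + s.natDegree = d := by
      have h1 := (hgm.pow 2).natDegree_mul hsm
      rw [← hfe, hf.2, hgm.natDegree_pow] at h1
      omega
    refine ⟨⟨g.natDegree, (g, s)⟩, ?_, hfe.symm⟩
    refine Finset.mem_sigma.2 ⟨Finset.mem_range.2 (show g.natDegree < d / 2 + 1 by omega), Finset.mem_product.2
      ⟨mem_Mfin.2 ⟨hgm, rfl⟩, mem_SF.2 ⟨⟨hsm, show s.natDegree = d - 2 * g.natDegree by omega⟩, hss⟩⟩⟩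
  · rintro ⟨k, g, s⟩ hx
    simp only [Finset.mem_sigma, Finset.mem_range, Finset.mem_product, mem_Mfin, mem_SF] at hx
    rw [Om_mul (pow_ne_zero 2 hx.2.1.1.ne_zero) hx.2.2.1.1.ne_zero, Om_sq]
    rw [pow_add, pow_mul]
    simp

lemma T_eval (d : ℕ) : ∑ f ∈ Mfin F d, (-1 : ℤ) ^ Om f
    = (-1 : ℤ) ^ d * (Fintype.card F : ℤ) ^ (d - d / 2) := by
  rw [T_eq, Finset.sum_eq_single (d / 2)]
  · rcases Nat.even_or_odd d with he | ho
    · have he' := Nat.even_iff.1 he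
      have h0 : d - 2 * (d / 2) = 0 := by omega
      have h1 : d - d / 2 = d / 2 := by omega
      rw [h0, MU_zero, h1, he.neg_one_pow, mul_one, one_mul]
    · have ho' := Nat.odd_iff.1 ho
      have h0 : d - 2 * (d / 2) = 1 := by omega
      have h1 : d - d / 2 = d / 2 + 1 := by omega
      rw [h0, MU_one, h1, ho.neg_one_pow, pow_succ]
      ring
  · intro k hk hne
    rw [Finset.mem_range] at hk
    rw [MU_eq_zero (by omega), mul_zero]
  · intro h
    exact absurd (Finset.mem_range.2 (by omega)) h


end Aux

/-- A monic degree `d` polynomial `f` over `F_q` with `r` irreducible factors counted with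
multiplicity has even factorization type when `sgn(f) = (-1)^{d-r} = 1`, i.e. when `d - r`
is even.  The number of monic degree `d` polynomials with even factorization type is
`(q^d + q^{d - ⌊d/2⌋})/2`; equivalently the probability is `(1/2)(1 + q^{-⌊d/2⌋})`. -/
theorem count_even_type (F : Type*) [Field F] [Fintype F] [DecidableEq F] (q d : ℕ)
    (hq : q = Fintype.card F) (hd : 0 < d) :
    2 * ({f : Polynomial F | f.Monic ∧ f.natDegree = d ∧
          Even (d - Multiset.card (normalizedFactors f))}.ncard)
      = q ^ d + q ^ (d - d / 2) := by
  classical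
  subst hq
  set q := Fintype.card F with hq
  set E := (Mfin F d).filter (fun f => Even (d - Om f)) with hE
  have hset : {f : Polynomial F | f.Monic ∧ f.natDegree = d ∧
      Even (d - Multiset.card (normalizedFactors f))} = ↑E := by
    ext f
    simp only [Set.mem_setOf_eq, hE, Finset.coe_filter, Finset.mem_coe, Finset.mem_filter, mem_Mfin, Om]
    constructor
    · intro h; exact Finset.mem_filter.2 ⟨mem_Mfin.2 ⟨h.1, h.2.1⟩, h.2.2⟩
    · intro h; have h' := Finset.mem_filter.1 h; exact ⟨(mem_Mfin.1 h'.1).1, (mem_Mfin.1 h'.1).2, h'.2⟩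
  rw [hset, Set.ncard_coe_finset]
  -- key sum identity
  have key : ∑ f ∈ Mfin F d, (-1 : ℤ) ^ (d - Om f) = (q : ℤ) ^ (d - d / 2) := by
    have h1 : ∀ f ∈ Mfin F d, (-1 : ℤ) ^ (d - Om f) = (-1) ^ d * (-1) ^ Om f := by
      intro f hf
      rw [mem_Mfin] at hf
      have hle : Om f ≤ d := hf.2 ▸ Om_le_natDegree hf.1
      have : (-1 : ℤ) ^ (d - Om f) * ((-1) ^ Om f * (-1) ^ Om f)
          = (-1) ^ d * (-1) ^ Om f := by
        rw [← mul_assoc, ← pow_add, Nat.sub_add_cancel hle]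
      simpa [← pow_add, ← two_mul, pow_mul] using this
    rw [Finset.sum_congr rfl h1, ← Finset.mul_sum, T_eval, ← mul_assoc, ← pow_add, ← two_mul,
      pow_mul]
    simp [hq]
  have hsplit : ∑ f ∈ Mfin F d, (-1 : ℤ) ^ (d - Om f)
      = (E.card : ℤ) - (((Mfin F d).filter (fun f => ¬ Even (d - Om f))).card : ℤ) := by
    rw [← Finset.sum_filter_add_sum_filter_not (Mfin F d) (fun f => Even (d - Om f))]
    congr 1
    · rw [Finset.sum_congr rfl (fun f hf => (Finset.mem_filter.1 hf).2.neg_one_pow)]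
      simp [hE]
    · rw [Finset.sum_congr rfl (fun f hf => (Nat.not_even_iff_odd.1
        (Finset.mem_filter.1 hf).2).neg_one_pow)]
      simp
  have hcards : E.card + ((Mfin F d).filter (fun f => ¬ Even (d - Om f))).card = q ^ d := by
    rw [hE, Finset.card_filter_add_card_filter_not, card_Mfin]
  have : 2 * (E.card : ℤ) = (q : ℤ) ^ d + (q : ℤ) ^ (d - d / 2) := by
    rw [hsplit] at key
    have := hcards
    push_cast [← this]
    linarith [key]
  exact_mod_cast this
end

section
/- For d >= 2 and a prime power q with q >= 2, the squarefree splitting measure nu^sf(lambda) = (1/(q^d - q^{d-1})) * prod_j binom(M_j(q), m_j(lambda)) is, for each fixed partition lambda of d, a polynomial in 1/q of degree at most d - 2 with rational coefficients (i.e., q^{d-2} * nu^sf(lambda) as a rational function of q is a polynomial in q). -/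
/-- The `j`-th necklace polynomial `M_j(q) = (1/j) ∑_{i ∣ j} μ(i) q^{j/i}`,
which counts monic irreducible degree `j` polynomials over `F_q`. -/
noncomputable def necklace (j : ℕ) (q : ℚ) : ℚ :=
  (1 / (j : ℚ)) * ∑ i ∈ j.divisors, ((ArithmeticFunction.moebius i : ℤ) : ℚ) * q ^ (j / i)

/-- Generalized binomial coefficient `binom(x, m) = x(x-1)⋯(x-m+1)/m!`. -/
noncomputable def gbinom (x : ℚ) (m : ℕ) : ℚ :=
  (descPochhammer ℚ m).eval x / (m.factorial : ℚ)

open Polynomial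

noncomputable def Mpoly (j : ℕ) : Polynomial ℚ :=
  Polynomial.C (1 / (j : ℚ)) *
    ∑ i ∈ j.divisors, Polynomial.C ((ArithmeticFunction.moebius i : ℤ) : ℚ) * Polynomial.X ^ (j / i)

noncomputable def gbinomPoly (f : Polynomial ℚ) (m : ℕ) : Polynomial ℚ :=
  Polynomial.C (1 / (m.factorial : ℚ)) * (descPochhammer ℚ m).comp f

lemma Mpoly_eval (j : ℕ) (q : ℚ) : (Mpoly j).eval q = necklace j q := by
  simp [Mpoly, necklace, Polynomial.eval_finset_sum]

lemma gbinomPoly_eval (f : Polynomial ℚ) (m : ℕ) (q : ℚ) :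
    (gbinomPoly f m).eval q = gbinom (f.eval q) m := by
  simp [gbinomPoly, gbinom, div_eq_mul_inv, mul_comm, one_div]

lemma Mpoly_natDegree_le (j : ℕ) : (Mpoly j).natDegree ≤ j := by
  refine (natDegree_C_mul_le _ _).trans ?_
  refine natDegree_sum_le_of_forall_le _ _ fun i hi => ?_
  refine (natDegree_C_mul_le _ _).trans ?_
  simpa using Nat.div_le_self j i

lemma gbinomPoly_natDegree_le (f : Polynomial ℚ) (m : ℕ) :
    (gbinomPoly f m).natDegree ≤ m * f.natDegree := by
  refine (natDegree_C_mul_le _ _).trans ?_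
  rw [natDegree_comp, descPochhammer_natDegree]

lemma Mpoly_eval_zero (j : ℕ) (hj : 1 ≤ j) : (Mpoly j).eval 0 = 0 := by
  simp only [Mpoly, eval_mul, eval_C, eval_finset_sum, eval_mul, eval_pow, eval_X]
  rw [Finset.sum_eq_zero, mul_zero]
  intro i hi
  have hipos : 0 < i := Nat.pos_of_mem_divisors hi
  have hdvd : i ∣ j := Nat.dvd_of_mem_divisors hi
  have : 0 < j / i := Nat.div_pos (Nat.le_of_dvd hj hdvd) hipos
  rw [zero_pow this.ne', mul_zero]

lemma Mpoly_eval_one (j : ℕ) (hj : 2 ≤ j) : (Mpoly j).eval 1 = 0 := by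
  simp only [Mpoly, eval_mul, eval_C, eval_finset_sum, eval_mul, eval_pow, eval_X, one_pow,
    mul_one]
  have : ∑ i ∈ j.divisors, (ArithmeticFunction.moebius i : ℤ) = 0 := by
    have h1 : ((ArithmeticFunction.moebius * ArithmeticFunction.zeta : ArithmeticFunction ℤ)) j
        = ∑ i ∈ j.divisors, (ArithmeticFunction.moebius i : ℤ) :=
      ArithmeticFunction.coe_mul_zeta_apply
    rw [ArithmeticFunction.moebius_mul_coe_zeta] at h1
    rw [← h1, ArithmeticFunction.one_apply]
    simp [show j ≠ 1 by omega]
  have : ∑ i ∈ j.divisors, ((ArithmeticFunction.moebius i : ℤ) : ℚ) = 0 := by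
    exact_mod_cast congrArg (fun z : ℤ => (z : ℚ)) this
  rw [this, mul_zero]

lemma Mpoly_one_eval_one : (Mpoly 1).eval 1 = 1 := by
  simp [Mpoly, Nat.divisors_one]

lemma descPochhammer_eval_one_eq_zero (m : ℕ) (hm : 2 ≤ m) :
    (descPochhammer ℚ m).eval 1 = 0 := by
  obtain ⟨n, rfl⟩ : ∃ n, m = n + 1 := ⟨m - 1, by omega⟩
  rw [descPochhammer_succ_left]
  simp only [eval_mul, eval_X, eval_comp, eval_sub, eval_one, sub_self, one_mul]
  exact descPochhammer_ne_zero_eval_zero ℚ (show n ≠ 0 by omega)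

/-- For `d ≥ 2` and each fixed partition `λ ⊢ d`, the squarefree splitting measure
`ν^sf(λ) = (1/(q^d - q^{d-1})) ∏_j binom(M_j(q), m_j(λ))` is a polynomial in `1/q` of
degree at most `d - 2` with rational coefficients. -/
theorem squarefree_splitting_measure_polynomial (d : ℕ) (hd : 2 ≤ d) (l : Nat.Partition d) :
    ∃ p : Polynomial ℚ, p.natDegree ≤ d - 2 ∧ ∀ q : ℕ, 2 ≤ q →
      (1 / ((q : ℚ) ^ d - (q : ℚ) ^ (d - 1))) *
          ∏ j ∈ Finset.Icc 1 d, gbinom (necklace j (q : ℚ)) (l.parts.count j)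
        = p.eval ((q : ℚ))⁻¹ := by
  classical
  set P : Polynomial ℚ :=
    ∏ j ∈ Finset.Icc 1 d, gbinomPoly (Mpoly j) (l.parts.count j) with hPdef
  have hPeval : ∀ q : ℚ,
      P.eval q = ∏ j ∈ Finset.Icc 1 d, gbinom (necklace j q) (l.parts.count j) := by
    intro q
    rw [hPdef, eval_prod]
    exact Finset.prod_congr rfl fun j _ => by rw [gbinomPoly_eval, Mpoly_eval]
  -- parts are in Icc 1 d
  have hmem : ∀ j ∈ l.parts, j ∈ Finset.Icc 1 d := by
    intro j hj
    have h1 : 0 < j := l.parts_pos hj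
    have h2 : j ≤ d := by
      calc j ≤ l.parts.sum := Multiset.le_sum_of_mem hj  -- name?
      _ = d := l.parts_sum
    exact Finset.mem_Icc.mpr ⟨h1, h2⟩
  -- degree bound
  have hPdeg : P.natDegree ≤ d := by
    refine (natDegree_prod_le _ _).trans ?_
    have hle : ∀ j ∈ Finset.Icc 1 d,
        (gbinomPoly (Mpoly j) (l.parts.count j)).natDegree ≤ l.parts.count j * j := by
      intro j hj
      exact (gbinomPoly_natDegree_le _ _).trans
        (Nat.mul_le_mul_left _ (Mpoly_natDegree_le j))
    refine (Finset.sum_le_sum hle).trans ?_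
    have hsum : ∑ j ∈ Finset.Icc 1 d, l.parts.count j * j = l.parts.sum := by
      have h1 : l.parts.sum = ∑ m ∈ l.parts.toFinset, l.parts.count m * m := by
        conv_lhs => rw [← Multiset.map_id l.parts]
        rw [Finset.sum_multiset_map_count]
        simp [smul_eq_mul]
      rw [h1]
      exact (Finset.sum_subset (fun j hj => hmem j (Multiset.mem_toFinset.mp hj))
        (fun x _ hx => by
          simp [Multiset.count_eq_zero.mpr (fun h => hx (Multiset.mem_toFinset.mpr h))])).symm
    rw [hsum, l.parts_sum]
  -- P has roots 0 and 1
  have hpartsne : l.parts ≠ 0 := by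
    intro h
    have := l.parts_sum
    rw [h] at this
    simp at this
    omega
  obtain ⟨j0, hj0⟩ := Multiset.exists_mem_of_ne_zero hpartsne
  have hP0 : P.eval 0 = 0 := by
    rw [hPdef, eval_prod]
    refine Finset.prod_eq_zero (hmem j0 hj0) ?_
    rw [gbinomPoly]
    have hc : l.parts.count j0 ≠ 0 := by
      have := Multiset.count_pos.mpr hj0; omega
    simp only [eval_mul, eval_C, eval_comp]
    rw [Mpoly_eval_zero j0 (Finset.mem_Icc.mp (hmem j0 hj0)).1,
      descPochhammer_ne_zero_eval_zero ℚ hc, mul_zero]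
  have hP1 : P.eval 1 = 0 := by
    by_cases hbig : ∃ j ∈ l.parts, 2 ≤ j
    · obtain ⟨j, hj, hj2⟩ := hbig
      rw [hPdef, eval_prod]
      refine Finset.prod_eq_zero (hmem j hj) ?_
      rw [gbinomPoly]
      simp only [eval_mul, eval_C, eval_comp]
      rw [Mpoly_eval_one j hj2]
      have hc : l.parts.count j ≠ 0 := by
        have := Multiset.count_pos.mpr hj; omega
      rw [descPochhammer_ne_zero_eval_zero ℚ hc, mul_zero]
    · push_neg at hbig
      have hones : ∀ j ∈ l.parts, j = 1 := by
        intro j hj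
        have := l.parts_pos hj
        have := hbig j hj
        omega
      have hrep : l.parts = Multiset.replicate l.parts.card 1 :=
        Multiset.eq_replicate_card.mpr hones
      have hcard : l.parts.card = d := by
        have := l.parts_sum
        rw [hrep] at this
        simpa using this
      have hcount : l.parts.count 1 = d := by
        rw [hrep, Multiset.count_replicate]
        simp [hcard]
      rw [hPdef, eval_prod]
      refine Finset.prod_eq_zero (Finset.mem_Icc.mpr ⟨le_refl 1, by omega⟩) ?_
      rw [gbinomPoly]
      simp only [eval_mul, eval_C, eval_comp]
      rw [Mpoly_one_eval_one, hcount, descPochhammer_eval_one_eq_zero d hd, mul_zero]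
  obtain ⟨e, rfl⟩ : ∃ e, d = e + 2 := ⟨d - 2, by omega⟩
  by_cases hP : P = 0
  · refine ⟨0, by simp, fun q hq => ?_⟩
    rw [← hPeval, hP]
    simp
  -- factor X and (X - 1)
  obtain ⟨Q, hQ⟩ : Polynomial.X ∣ P := by
    rw [Polynomial.X_dvd_iff, Polynomial.coeff_zero_eq_eval_zero, hP0]
  have hQ1 : Q.eval 1 = 0 := by
    have := hP1
    rw [hQ] at this
    simpa using this
  obtain ⟨R, hR⟩ : (Polynomial.X - Polynomial.C 1) ∣ Q := (dvd_iff_isRoot).mpr hQ1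
  have hPfac : P = Polynomial.X * ((Polynomial.X - Polynomial.C 1) * R) := by
    rw [hQ, hR]
  have hQne : Q ≠ 0 := fun h => hP (by rw [hQ, h, mul_zero])
  have hRne : R ≠ 0 := fun h => hQne (by rw [hR, h, mul_zero])
  have hRdeg : R.natDegree ≤ e := by
    have h1 : P.natDegree = 2 + R.natDegree := by
      rw [hPfac, natDegree_mul (X_ne_zero) (mul_ne_zero (X_sub_C_ne_zero 1) hRne),
        natDegree_mul (X_sub_C_ne_zero 1) hRne, natDegree_X, natDegree_X_sub_C]
      ring
    omega
  refine ⟨∑ k ∈ Finset.range (e + 1), Polynomial.C (R.coeff k) * Polynomial.X ^ (e - k),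
    ?_, ?_⟩
  · refine natDegree_sum_le_of_forall_le _ _ fun k hk => ?_
    refine (natDegree_C_mul_le _ _).trans ?_
    simpa using Nat.sub_le e k
  · intro q hq
    have hq0 : (q : ℚ) ≠ 0 := by positivity
    have hq1 : (q : ℚ) - 1 ≠ 0 := by
      have : (2 : ℚ) ≤ (q : ℚ) := by exact_mod_cast hq
      intro h; nlinarith
    rw [← hPeval, hPfac]
    simp only [eval_mul, eval_sub, eval_X, eval_C, eval_finset_sum, eval_pow]
    have hfac : (q : ℚ) ^ (e + 2) - (q : ℚ) ^ (e + 2 - 1) = (q:ℚ) ^ (e+1) * ((q:ℚ) - 1) := by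
      have : e + 2 - 1 = e + 1 := by omega
      rw [this]; ring
    rw [hfac]
    rw [Polynomial.eval_eq_sum_range' (by omega : R.natDegree < e + 1)]
    rw [Finset.mul_sum, Finset.mul_sum, Finset.mul_sum]
    refine Finset.sum_congr rfl fun k hk => ?_
    have hke : k ≤ e := by simpa using Nat.lt_succ_iff.mp (Finset.mem_range.mp hk)
    have hsplit : (q:ℚ) ^ (e + 1) = (q:ℚ) ^ (e - k) * (q:ℚ) ^ k * q := by
      rw [← pow_add, ← pow_succ]
      congr 1
      omega
    rw [one_div, hsplit]
    field_simp
    rw [one_div, inv_pow, mul_comm ((q:ℚ) ^ (e - k)), mul_assoc, mul_inv_cancel₀ (pow_ne_zero _ hq0), mul_one]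
  done
end

section
/- Let d >= 1. Viewing the sign character sgn of S_d as a factorization statistic, the expected value identity sum_{lambda ⊢ d} sgn(lambda) * (1/q^d) * prod_j multichoose(M_j(q), m_j(lambda)) = q^{-floor(d/2)} holds as an identity of rational functions in q, where sgn(lambda) = prod_j (-1)^{m_j (j-1)}. -/
/-- `multichoose x m = x(x+1)⋯(x+m-1)/m! = binom(x+m-1, m)`. -/
noncomputable def multichoose (x : ℚ) (m : ℕ) : ℚ :=
  (ascPochhammer ℚ m).eval x / (m.factorial : ℚ)

open Finset

lemma necklace_sum (n : ℕ) (hn : 0 < n) (q : ℚ) :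
    ∑ j ∈ n.divisors, (j:ℚ) * necklace j q = q ^ n := by
  have key : ∀ j : ℕ, j > 0 →
      ∑ p ∈ j.divisorsAntidiagonal, (ArithmeticFunction.moebius p.1) • (q ^ p.2)
        = (j:ℚ) * necklace j q := by
    intro j hj
    have hj0 : (j:ℚ) ≠ 0 := by exact_mod_cast hj.ne'
    rw [necklace, Nat.sum_divisorsAntidiagonal
      (f := fun i e => (ArithmeticFunction.moebius i) • (q ^ e))]
    field_simp
    simp [zsmul_eq_mul]
  exact (ArithmeticFunction.sum_eq_iff_sum_smul_moebius_eq
    (f := fun j => (j:ℚ) * necklace j q) (g := fun n => q ^ n)).mpr key n hn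

lemma sign_divisor (m : ℕ) (hm2 : m % 2 = 0) (j : ℕ) (hj : j ∈ m.divisors) :
    ((-1:ℚ))^((j-1)*(m/j)) = if j ∈ (m/2).divisors then 1 else -1 := by
  obtain ⟨hjd, hm0⟩ := Nat.mem_divisors.mp hj
  have hj0 : 0 < j := Nat.pos_of_dvd_of_pos hjd (Nat.pos_of_ne_zero hm0)
  have hm2' : 2 ∣ m := Nat.dvd_of_mod_eq_zero hm2
  have hmm : m = 2 * (m/2) := (Nat.two_mul_div_two_of_even (Nat.even_iff.mpr hm2)).symm
  by_cases h : j ∣ m/2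
  · rw [if_pos (Nat.mem_divisors.mpr ⟨h, by omega⟩)]
    clear hj
    obtain ⟨t, ht⟩ := h
    have : m / j = 2 * t := by
      rw [hmm, ht]; rw [mul_left_comm]; exact Nat.mul_div_cancel_left _ hj0
    rw [this]
    rw [show (j-1)*(2*t) = 2*((j-1)*t) by ring, pow_mul]
    norm_num
  · rw [if_neg (by simp [Nat.mem_divisors, h])]
    have hjeven : j % 2 = 0 := by
      rcases Nat.even_or_odd j with he | ho
      · exact Nat.even_iff.mp he
      · exact absurd ((Nat.Coprime.dvd_of_dvd_mul_left
          (Nat.coprime_two_right.mpr ho) (hmm ▸ hjd)) ) h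
    have hmj : (m/j) % 2 = 1 := by
      rcases Nat.even_or_odd (m/j) with he | ho
      · exfalso
        obtain ⟨t, ht⟩ := he
        have h1 : m = j * (m/j) := (Nat.mul_div_cancel' hjd).symm
        have h2 : m = 2 * (j * t) := by rw [h1, ht]; ring
        have h3 : m / 2 = j * t := by omega
        exact h ⟨t, h3⟩
      · exact Nat.odd_iff.mp ho
    have hodd : Odd ((j-1)*(m/j)) :=
      Nat.odd_mul.mpr ⟨Nat.odd_iff.mpr (by omega), Nat.odd_iff.mpr hmj⟩
    have : (j-1)*(m/j) % 2 = 1 := Nat.odd_iff.mp hodd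
    rw [← Nat.div_add_mod ((j-1)*(m/j)) 2, this, pow_add, pow_mul]
    norm_num

lemma c_eval (m : ℕ) (hm : 0 < m) (q : ℚ) :
    ∑ j ∈ m.divisors, (j:ℚ) * necklace j q * (-1)^((j-1)*(m/j)) =
      if m % 2 = 1 then q^m else 2*q^(m/2) - q^m := by
  rcases Nat.even_or_odd m with he | ho
  · have hm2 : m % 2 = 0 := Nat.even_iff.mp he
    rw [if_neg (by omega)]
    have step : ∑ j ∈ m.divisors, (j:ℚ) * necklace j q * (-1)^((j-1)*(m/j))
        = ∑ j ∈ m.divisors, (2 * (if j ∈ (m/2).divisors then (j:ℚ) * necklace j q else 0)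
            - (j:ℚ) * necklace j q) := by
      refine Finset.sum_congr rfl fun j hj => ?_
      rw [sign_divisor m hm2 j hj]
      by_cases h : j ∈ (m/2).divisors <;> simp [h] <;> ring
    rw [step, Finset.sum_sub_distrib, ← Finset.mul_sum, ← Finset.sum_filter]
    have hsub : (m/2).divisors ⊆ m.divisors :=
      Nat.divisors_subset_of_dvd hm.ne' (Nat.div_dvd_of_dvd (Nat.dvd_of_mod_eq_zero hm2))
    have hfil : m.divisors.filter (· ∈ (m/2).divisors) = (m/2).divisors := by
      ext j
      simp only [Finset.mem_filter]
      exact ⟨fun h => h.2, fun h => ⟨hsub h, h⟩⟩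
    rw [hfil, necklace_sum m hm q, necklace_sum (m/2) (by omega) q]
  · rw [if_pos (Nat.odd_iff.mp ho)]
    have : ∀ j ∈ m.divisors, (j:ℚ) * necklace j q * (-1)^((j-1)*(m/j))
        = (j:ℚ) * necklace j q := by
      intro j hj
      have hjodd : Odd j := ho.of_dvd_nat (Nat.mem_divisors.mp hj).1
      obtain ⟨t, ht⟩ := hjodd
      have h1 : j - 1 = 2*t := by omega
      rw [h1, mul_assoc, pow_mul]
      norm_num
    rw [Finset.sum_congr rfl this, necklace_sum m hm q]

noncomputable def Cc (q : ℚ) (m : ℕ) : ℚ := if m % 2 = 1 then q^m else 2*q^(m/2) - q^m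

lemma key_identity (q : ℚ) : ∀ n : ℕ, 0 < n →
    ∑ m ∈ Finset.Icc 1 n, Cc q m * q^((n-m+1)/2) = n * q^((n+1)/2) := by
  intro n
  induction n using Nat.strong_induction_on with
  | _ n ih =>
    intro hn
    match n, hn with
    | 1, _ => simp [Cc]
    | 2, _ =>
      rw [show (2:ℕ) = 1 + 1 from rfl, Finset.sum_Icc_succ_top (by norm_num)]
      simp [Cc]
      ring
    | (k+3), _ =>
      rw [Finset.sum_Icc_succ_top (by omega), Finset.sum_Icc_succ_top (by omega)]
      have hmain : ∑ m ∈ Finset.Icc 1 (k+1), Cc q m * q^((k+3-m+1)/2)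
          = q * ∑ m ∈ Finset.Icc 1 (k+1), Cc q m * q^((k+1-m+1)/2) := by
        rw [Finset.mul_sum]
        refine Finset.sum_congr rfl fun m hm => ?_
        have hm1 : m ≤ k+1 := (Finset.mem_Icc.mp hm).2
        have he : (k+3-m+1)/2 = (k+1-m+1)/2 + 1 := by omega
        rw [he, pow_succ]
        ring
      rw [hmain, ih (k+1) (by omega) (by omega)]
      have e1 : (k+1+1)/2 + 1 = (k+3+1)/2 := by omega
      have e2 : (k+3) - (k+2) + 1 = 2 := by omega
      have e3 : (k+3) - (k+3) + 1 = 1 := by omega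
      rw [e2, e3]
      norm_num
      have goal2 : Cc q (k+2) * q + Cc q (k+3) = 2 * q^((k+3+1)/2) := by
        rcases Nat.even_or_odd k with he | ho
        · have hk := Nat.even_iff.mp he
          have h3 : (k+3) % 2 = 1 := by omega
          rw [Cc, Cc, if_neg (by omega), if_pos h3]
          have : (k+2)/2 + 1 = (k+3+1)/2 := by omega
          rw [← this, pow_succ]
          ring
        · have h2 : (k+2) % 2 = 1 := by have := Nat.odd_iff.mp ho; omega
          have h3 : (k+3) % 2 = 0 := by have := Nat.odd_iff.mp ho; omega
          rw [Cc, Cc, if_pos h2, if_neg (by omega)]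
          have : (k+3)/2 = (k+3+1)/2 := by have := Nat.odd_iff.mp ho; omega
          rw [this]
          ring
      calc q * (((k:ℚ)+1) * q^((k+1+1)/2)) + Cc q (k+1+1) * q + Cc q (k+2+1)
          = ((k:ℚ)+1) * q^((k+1+1)/2 + 1) + (Cc q (k+2) * q + Cc q (k+3)) := by
            rw [pow_succ]; norm_num; ring
        _ = ((k:ℚ)+3) * q^((k+3+1)/2) := by rw [goal2, e1]; ring

noncomputable def ff (q : ℚ) (j m : ℕ) : ℚ :=
  (-1:ℚ)^(m*(j-1)) * multichoose (necklace j q) m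

lemma multichoose_zero (x : ℚ) : multichoose x 0 = 1 := by simp [multichoose]

lemma ff_zero (q : ℚ) (j : ℕ) : ff q j 0 = 1 := by simp [ff, multichoose_zero]

noncomputable def S (q : ℚ) (n : ℕ) : ℚ :=
  ∑ l : Nat.Partition n, ∏ j ∈ Finset.Icc 1 n, ff q j (Multiset.count j l.parts)

lemma count_eq_zero_of_not_mem_Icc {n : ℕ} (l : n.Partition) {j : ℕ}
    (hj : j ∉ Finset.Icc 1 n) : Multiset.count j l.parts = 0 := by
  rw [Multiset.count_eq_zero]
  intro hmem
  exact hj (Finset.mem_Icc.mpr ⟨l.parts_pos hmem,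
    (Multiset.le_sum_of_mem hmem).trans_eq l.parts_sum⟩)

lemma prod_ext (q : ℚ) {n N : ℕ} (hN : n ≤ N) (l : n.Partition) :
    ∏ j ∈ Finset.Icc 1 N, ff q j (Multiset.count j l.parts)
      = ∏ j ∈ Finset.Icc 1 n, ff q j (Multiset.count j l.parts) := by
  refine (Finset.prod_subset (Finset.Icc_subset_Icc_right hN) ?_).symm
  intro j _ hjn
  rw [count_eq_zero_of_not_mem_Icc l hjn, ff_zero]

lemma count_mul_le {n : ℕ} (l : n.Partition) (j : ℕ) : j * Multiset.count j l.parts ≤ n := by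
  have hle : Multiset.replicate (Multiset.count j l.parts) j ≤ l.parts :=
    Multiset.le_count_iff_replicate_le.mp le_rfl
  have h1 := tsub_add_cancel_of_le hle
  have h2 : (l.parts - Multiset.replicate (Multiset.count j l.parts) j).sum
      + (Multiset.replicate (Multiset.count j l.parts) j).sum = n := by
    rw [← Multiset.sum_add, h1, l.parts_sum]
  rw [Multiset.sum_replicate, smul_eq_mul, mul_comm] at h2
  omega

lemma parts_sum_eq {n : ℕ} (l : n.Partition) :
    ∑ j ∈ Finset.Icc 1 n, j * Multiset.count j l.parts = n := by
  have h1 : (l.parts.map id).sum = ∑ m ∈ l.parts.toFinset, Multiset.count m l.parts • id m :=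
    Finset.sum_multiset_map_count l.parts id
  rw [Multiset.map_id, l.parts_sum] at h1
  have h2 : ∑ j ∈ Finset.Icc 1 n, j * Multiset.count j l.parts
      = ∑ m ∈ l.parts.toFinset, Multiset.count m l.parts • id m := by
    rw [← Finset.sum_subset (s₁ := l.parts.toFinset) (s₂ := Finset.Icc 1 n)]
    · refine Finset.sum_congr rfl fun m _ => ?_
      simp [mul_comm]
    · intro a ha
      have := Multiset.mem_toFinset.mp ha
      exact Finset.mem_Icc.mpr ⟨l.parts_pos this,
        (Multiset.le_sum_of_mem this).trans_eq l.parts_sum⟩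
    · intro a _ ha
      simp [Multiset.count_eq_zero.mpr (fun h => ha (Multiset.mem_toFinset.mpr h))]
  omega

lemma part_bij (n j k : ℕ) (hj : 0 < j) (hjk : j * k ≤ n) (g : Multiset ℕ → ℚ) :
    ∑ l ∈ Finset.univ.filter (fun l : n.Partition => k ≤ Multiset.count j l.parts),
        g (l.parts - Multiset.replicate k j)
      = ∑ l' : (n - j*k).Partition, g l'.parts := by
  have sum_sub : ∀ l : n.Partition, k ≤ Multiset.count j l.parts →
      (l.parts - Multiset.replicate k j).sum = n - j*k := by
    intro l h
    have hrep : Multiset.replicate k j ≤ l.parts := Multiset.le_count_iff_replicate_le.mp h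
    have h1 : (l.parts - Multiset.replicate k j).sum + (Multiset.replicate k j).sum = n := by
      rw [← Multiset.sum_add, tsub_add_cancel_of_le hrep, l.parts_sum]
    rw [Multiset.sum_replicate, smul_eq_mul, Nat.mul_comm k j] at h1
    omega
  classical
  set i : n.Partition → (n - j*k).Partition := fun l =>
    if h : k ≤ Multiset.count j l.parts then
      ⟨l.parts - Multiset.replicate k j,
        fun hi => l.parts_pos (Multiset.mem_of_le tsub_le_self hi),
        sum_sub l h⟩
    else default with hi_def
  set e : (n - j*k).Partition → n.Partition := fun l' =>
    ⟨l'.parts + Multiset.replicate k j,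
      fun hi => by
        rcases Multiset.mem_add.mp hi with h' | h'
        · exact l'.parts_pos h'
        · rw [Multiset.eq_of_mem_replicate h']; exact hj,
      by rw [Multiset.sum_add, l'.parts_sum, Multiset.sum_replicate, smul_eq_mul,
             Nat.mul_comm k j]; omega⟩
      with he_def
  refine Finset.sum_nbij' i e ?_ ?_ ?_ ?_ ?_
  · intro a _; exact Finset.mem_univ _
  · intro b _
    refine Finset.mem_filter.mpr ⟨Finset.mem_univ _, ?_⟩
    show k ≤ Multiset.count j (b.parts + Multiset.replicate k j)
    rw [Multiset.count_add, Multiset.count_replicate_self]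
    omega
  · intro a ha
    have hk : k ≤ Multiset.count j a.parts := (Finset.mem_filter.mp ha).2
    apply Nat.Partition.ext
    simp only [he_def, hi_def, dif_pos hk]
    exact tsub_add_cancel_of_le (Multiset.le_count_iff_replicate_le.mp hk)
  · intro b _
    have hk : k ≤ Multiset.count j (e b).parts := by
      simp only [he_def, Multiset.count_add, Multiset.count_replicate_self]
      omega
    apply Nat.Partition.ext
    simp only [hi_def, he_def, dif_pos hk] at hk ⊢
    · rw [dif_pos hk]; exact add_tsub_cancel_right b.parts (Multiset.replicate k j)
  · intro a ha
    have hk : k ≤ Multiset.count j a.parts := (Finset.mem_filter.mp ha).2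
    congr 1
    simp only [hi_def, dif_pos hk]

lemma multichoose_succ (x : ℚ) (m : ℕ) :
    ((m:ℚ)+1) * multichoose x (m+1) = (x + m) * multichoose x m := by
  rw [multichoose, multichoose, ascPochhammer_succ_right]
  simp only [Polynomial.eval_mul, Polynomial.eval_add, Polynomial.eval_X, Polynomial.eval_natCast]
  rw [Nat.factorial_succ]
  push_cast
  field_simp

lemma multichoose_sum (x : ℚ) (m : ℕ) :
    (m:ℚ) * multichoose x m = x * ∑ k ∈ Finset.range m, multichoose x k := by
  induction m with
  | zero => simp
  | succ m ih =>
    rw [Finset.sum_range_succ, mul_add]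
    push_cast
    rw [multichoose_succ, add_mul, ih]
    ring

noncomputable def gg (q : ℚ) (n : ℕ) (M : Multiset ℕ) : ℚ :=
  ∏ i ∈ Finset.Icc 1 n, ff q i (Multiset.count i M)

lemma S_eq_gg (q : ℚ) (n : ℕ) : S q n = ∑ l : n.Partition, gg q n l.parts := rfl

lemma ff_sum (q : ℚ) (j m : ℕ) :
    (m:ℚ) * ff q j m
      = necklace j q * ∑ k ∈ Finset.Icc 1 m, (-1:ℚ)^(k*(j-1)) * ff q j (m-k) := by
  have hre : ∑ k ∈ Finset.Icc 1 m, multichoose (necklace j q) (m-k)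
      = ∑ r ∈ Finset.range m, multichoose (necklace j q) r := by
    refine Finset.sum_nbij' (fun k => m - k) (fun r => m - r) ?_ ?_ ?_ ?_ ?_
    · intro a ha; simp only [Finset.mem_Icc, Finset.mem_range] at *; omega
    · intro a ha; simp only [Finset.mem_Icc, Finset.mem_range] at *; omega
    · intro a ha; simp only [Finset.mem_Icc, Finset.mem_range] at *; omega
    · intro a ha; simp only [Finset.mem_Icc, Finset.mem_range] at *; omega
    · intro a _; rfl
  have step : ∀ k ∈ Finset.Icc 1 m, (-1:ℚ)^(k*(j-1)) * ff q j (m-k)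
      = (-1:ℚ)^(m*(j-1)) * multichoose (necklace j q) (m-k) := by
    intro k hk
    have hk' : k ≤ m := (Finset.mem_Icc.mp hk).2
    have hmk : k + (m - k) = m := by omega
    rw [ff, ← mul_assoc, ← pow_add, ← Nat.add_mul, hmk]
  calc (m:ℚ) * ff q j m
      = (-1:ℚ)^(m*(j-1)) * ((m:ℚ) * multichoose (necklace j q) m) := by rw [ff]; ring
    _ = (-1:ℚ)^(m*(j-1)) * (necklace j q
          * ∑ r ∈ Finset.range m, multichoose (necklace j q) r) := by rw [multichoose_sum]
    _ = necklace j q * ∑ k ∈ Finset.Icc 1 m, (-1:ℚ)^(k*(j-1)) * ff q j (m-k) := by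
        rw [Finset.sum_congr rfl step, ← Finset.mul_sum, hre]; ring

lemma perj (q : ℚ) (n : ℕ) (j : ℕ) (hj : j ∈ Finset.Icc 1 n) :
    ∑ l : n.Partition, (Multiset.count j l.parts : ℚ) * gg q n l.parts
      = necklace j q * ∑ k ∈ Finset.Icc 1 (n/j), (-1:ℚ)^(k*(j-1)) * S q (n - j*k) := by
  have hj1 : 1 ≤ j := (Finset.mem_Icc.mp hj).1
  have hcount_le : ∀ l : n.Partition, Multiset.count j l.parts ≤ n / j := fun l =>
    (Nat.le_div_iff_mul_le (by omega)).mpr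
      (by have := count_mul_le l j; rw [Nat.mul_comm]; omega)
  have step1 : ∀ l : n.Partition,
      (Multiset.count j l.parts : ℚ) * gg q n l.parts
        = necklace j q * ∑ k ∈ Finset.Icc 1 (n/j),
            (if k ≤ Multiset.count j l.parts then
              (-1:ℚ)^(k*(j-1)) * gg q n (l.parts - Multiset.replicate k j) else 0) := by
    intro l
    set m := Multiset.count j l.parts with hm
    have hgsplit : ∀ k, gg q n (l.parts - Multiset.replicate k j)
        = ff q j (m - k) * ∏ i ∈ (Finset.Icc 1 n).erase j,
            ff q i (Multiset.count i l.parts) := by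
      intro k
      rw [gg, ← Finset.mul_prod_erase _ _ hj]
      congr 1
      · rw [Multiset.count_sub, Multiset.count_replicate, if_pos rfl]
      · refine Finset.prod_congr rfl fun i hi => ?_
        have hij : i ≠ j := (Finset.mem_erase.mp hi).1
        rw [Multiset.count_sub, Multiset.count_replicate, if_neg (fun h => hij h.symm), Nat.sub_zero]
    have hsplit : gg q n l.parts = ff q j m * ∏ i ∈ (Finset.Icc 1 n).erase j,
        ff q i (Multiset.count i l.parts) := by
      rw [gg, ← Finset.mul_prod_erase _ _ hj]
    rw [hsplit, ← mul_assoc, ff_sum q j m, mul_assoc, Finset.sum_mul]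
    congr 1
    refine Eq.trans ?_ (Finset.sum_subset (Finset.Icc_subset_Icc_right (hcount_le l)) ?_)
    · refine Finset.sum_congr rfl fun k hk => ?_
      have hk' : k ≤ m := (Finset.mem_Icc.mp hk).2
      rw [if_pos hk', hgsplit k]
      ring
    · intro k hkK hkm
      have : ¬ (k ≤ m) := by
        simp only [Finset.mem_Icc] at hkK hkm
        omega
      rw [if_neg this]
  calc ∑ l : n.Partition, (Multiset.count j l.parts : ℚ) * gg q n l.parts
      = ∑ l : n.Partition, necklace j q * ∑ k ∈ Finset.Icc 1 (n/j),
          (if k ≤ Multiset.count j l.parts then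
            (-1:ℚ)^(k*(j-1)) * gg q n (l.parts - Multiset.replicate k j) else 0) :=
        Finset.sum_congr rfl fun l _ => step1 l
    _ = necklace j q * ∑ k ∈ Finset.Icc 1 (n/j), ∑ l : n.Partition,
          (if k ≤ Multiset.count j l.parts then
            (-1:ℚ)^(k*(j-1)) * gg q n (l.parts - Multiset.replicate k j) else 0) := by
        rw [← Finset.mul_sum, Finset.sum_comm]
    _ = necklace j q * ∑ k ∈ Finset.Icc 1 (n/j), (-1:ℚ)^(k*(j-1)) * S q (n - j*k) := by
        congr 1
        refine Finset.sum_congr rfl fun k hk => ?_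
        have hk1 : 1 ≤ k := (Finset.mem_Icc.mp hk).1
        have hk2 : k ≤ n / j := (Finset.mem_Icc.mp hk).2
        have hjk : j * k ≤ n := by
          have h := (Nat.le_div_iff_mul_le (show 0 < j by omega)).mp hk2
          rw [Nat.mul_comm] at h
          exact h
        rw [← Finset.sum_filter, ← Finset.mul_sum]
        congr 1
        rw [part_bij n j k (by omega) hjk (gg q n)]
        rw [S_eq_gg]
        refine Finset.sum_congr rfl fun l' _ => ?_
        rw [gg, gg, prod_ext q (by omega) l']

lemma reindex (n : ℕ) (F : ℕ → ℕ → ℚ) :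
    ∑ j ∈ Finset.Icc 1 n, ∑ k ∈ Finset.Icc 1 (n/j), F j (j*k)
      = ∑ m ∈ Finset.Icc 1 n, ∑ j ∈ m.divisors, F j m := by
  rw [Finset.sum_sigma' (Finset.Icc 1 n) (fun j => Finset.Icc 1 (n/j))
        (fun j k => F j (j*k)),
      Finset.sum_sigma' (Finset.Icc 1 n) (fun m => m.divisors) (fun m j => F j m)]
  refine Finset.sum_nbij' (fun p => ⟨p.1 * p.2, p.1⟩) (fun p => ⟨p.2, p.1 / p.2⟩)
    ?_ ?_ ?_ ?_ ?_
  · rintro ⟨j, k⟩ hp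
    simp only [Finset.mem_sigma, Finset.mem_Icc, Nat.mem_divisors] at hp ⊢
    obtain ⟨⟨hj1, hjn⟩, hk1, hk2⟩ := hp
    have hjk : j * k ≤ n := by
      have h := (Nat.le_div_iff_mul_le (show 0 < j by omega)).mp hk2
      rw [Nat.mul_comm] at h
      exact h
    exact ⟨⟨Nat.mul_pos (by omega) (by omega), hjk⟩, dvd_mul_right j k,
      (Nat.mul_pos (show 0 < j by omega) (show 0 < k by omega)).ne'⟩
  · rintro ⟨m, j⟩ hp
    simp only [Finset.mem_sigma, Finset.mem_Icc, Nat.mem_divisors] at hp ⊢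
    obtain ⟨⟨hm1, hmn⟩, hjm, hm0⟩ := hp
    have hj0 : 0 < j := Nat.pos_of_dvd_of_pos hjm (by omega)
    refine ⟨⟨hj0, (Nat.le_of_dvd (by omega) hjm).trans hmn⟩,
      Nat.one_le_div_iff hj0 |>.mpr (Nat.le_of_dvd (by omega) hjm),
      Nat.div_le_div_right hmn⟩
  · rintro ⟨j, k⟩ hp
    simp only [Finset.mem_sigma, Finset.mem_Icc] at hp
    obtain ⟨⟨hj1, _⟩, _, _⟩ := hp
    simp [Nat.mul_div_cancel_left k (show 0 < j by omega)]
  · rintro ⟨m, j⟩ hp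
    simp only [Finset.mem_sigma, Finset.mem_Icc, Nat.mem_divisors] at hp
    obtain ⟨_, hjm, _⟩ := hp
    simp [Nat.mul_div_cancel' hjm]
  · rintro ⟨j, k⟩ _
    rfl

lemma S_rec (q : ℚ) (n : ℕ) (hn : 0 < n) :
    (n:ℚ) * S q n = ∑ m ∈ Finset.Icc 1 n, Cc q m * S q (n - m) := by
  have lhs1 : (n:ℚ) * S q n
      = ∑ j ∈ Finset.Icc 1 n, ∑ k ∈ Finset.Icc 1 (n/j),
          ((j:ℚ) * necklace j q * ((-1:ℚ)^(k*(j-1)) * S q (n - j*k))) := by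
    rw [S_eq_gg, Finset.mul_sum]
    have hterm : ∀ l : n.Partition, (n:ℚ) * gg q n l.parts
        = ∑ j ∈ Finset.Icc 1 n,
            (j:ℚ) * ((Multiset.count j l.parts : ℚ) * gg q n l.parts) := by
      intro l
      calc (n:ℚ) * gg q n l.parts
          = ((∑ j ∈ Finset.Icc 1 n, j * Multiset.count j l.parts : ℕ) : ℚ)
              * gg q n l.parts := by rw [parts_sum_eq l]
        _ = ∑ j ∈ Finset.Icc 1 n,
              ((j:ℚ) * (Multiset.count j l.parts : ℚ)) * gg q n l.parts := by
            push_cast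
            rw [Finset.sum_mul]
        _ = ∑ j ∈ Finset.Icc 1 n,
              (j:ℚ) * ((Multiset.count j l.parts : ℚ) * gg q n l.parts) :=
            Finset.sum_congr rfl fun j _ => by ring
    rw [Finset.sum_congr rfl fun l _ => hterm l, Finset.sum_comm]
    refine Finset.sum_congr rfl fun j hj => ?_
    rw [← Finset.mul_sum, perj q n j hj, Finset.mul_sum, Finset.mul_sum]
    refine Finset.sum_congr rfl fun k _ => ?_
    ring
  set F : ℕ → ℕ → ℚ :=
    fun j m => (j:ℚ) * necklace j q * ((-1:ℚ)^((j-1)*(m/j)) * S q (n - m)) with hF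
  calc (n:ℚ) * S q n
      = ∑ j ∈ Finset.Icc 1 n, ∑ k ∈ Finset.Icc 1 (n/j), F j (j*k) := by
        rw [lhs1]
        refine Finset.sum_congr rfl fun j hj => Finset.sum_congr rfl fun k _ => ?_
        have hj1 : 1 ≤ j := (Finset.mem_Icc.mp hj).1
        simp only [hF]
        rw [Nat.mul_div_cancel_left k (show 0 < j by omega), Nat.mul_comm k (j-1)]
    _ = ∑ m ∈ Finset.Icc 1 n, ∑ j ∈ m.divisors, F j m := reindex n F
    _ = ∑ m ∈ Finset.Icc 1 n, Cc q m * S q (n - m) := by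
        refine Finset.sum_congr rfl fun m hm => ?_
        have hm1 : 0 < m := (Finset.mem_Icc.mp hm).1
        calc ∑ j ∈ m.divisors, F j m
            = (∑ j ∈ m.divisors, (j:ℚ) * necklace j q * (-1:ℚ)^((j-1)*(m/j)))
                * S q (n - m) := by
              rw [Finset.sum_mul]
              exact Finset.sum_congr rfl fun j _ => by simp only [hF]; ring
          _ = Cc q m * S q (n - m) := by rw [c_eval m hm1 q, Cc]

lemma S_closed (q : ℚ) (n : ℕ) : S q n = q^((n+1)/2) := by
  induction n using Nat.strong_induction_on with
  | _ n ih =>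
    rcases Nat.eq_zero_or_pos n with h0 | hn
    · subst h0
      rw [S]
      simp
    · have hrec := S_rec q n hn
      have : ∑ m ∈ Finset.Icc 1 n, Cc q m * S q (n - m)
          = ∑ m ∈ Finset.Icc 1 n, Cc q m * q^((n-m+1)/2) := by
        refine Finset.sum_congr rfl fun m hm => ?_
        have hm' := Finset.mem_Icc.mp hm
        rw [ih (n - m) (by omega)]
      rw [this, key_identity q n hn] at hrec
      have hn0 : (n:ℚ) ≠ 0 := by exact_mod_cast hn.ne'
      exact mul_left_cancel₀ hn0 hrec

/-- The expected value of the sign statistic `sgn(λ) = ∏_j (-1)^{m_j (j-1)}` against the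
splitting measure `ν(λ) = (1/q^d) ∏_j multichoose(M_j(q), m_j(λ))` equals `q^{-⌊d/2⌋}`,
as an identity of rational functions in `q`. -/
theorem expected_sgn_eq (d : ℕ) (hd : 0 < d) (q : ℚ) (hq : q ≠ 0) :
    ∑ l : Nat.Partition d,
        (∏ j ∈ Finset.Icc 1 d, (-1 : ℚ) ^ (l.parts.count j * (j - 1))) *
          ((1 / q ^ d) * ∏ j ∈ Finset.Icc 1 d, multichoose (necklace j q) (l.parts.count j))
      = (q ^ (d / 2))⁻¹ := by
  have h1 : ∀ l : Nat.Partition d,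
      (∏ j ∈ Finset.Icc 1 d, (-1 : ℚ) ^ (l.parts.count j * (j - 1))) *
        ((1 / q ^ d) * ∏ j ∈ Finset.Icc 1 d, multichoose (necklace j q) (l.parts.count j))
      = (1/q^d) * gg q d l.parts := by
    intro l
    simp only [gg, ff]
    rw [Finset.prod_mul_distrib]
    ring
  rw [Finset.sum_congr rfl (fun l _ => h1 l), ← Finset.mul_sum, ← S_eq_gg, S_closed]
  have hsplit : d/2 + (d+1)/2 = d := by omega
  have h2 : q^((d+1)/2) ≠ 0 := pow_ne_zero _ hq
  have h3 : q^(d/2) ≠ 0 := pow_ne_zero _ hq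
  rw [show q^d = q^(d/2) * q^((d+1)/2) by rw [← pow_add, hsplit]]
  field_simp
end

section
/- The generating function identity sum_{d >= 1} E_d(R) t^d = (t/(1 - t/q)) * (1/(1-t)) holds, where E_d(R) = sum_{lambda ⊢ d} x_1(lambda) * nu(lambda), nu(lambda) = (1/q^d) prod_j multichoose(M_j(q), m_j(lambda)), and x_1(lambda) = m_1(lambda). Consequently E_d(R) = (1 - q^{-d})/(1 - q^{-1}). -/
/-- `E_d(R) = ∑_{λ ⊢ d} x₁(λ) ν(λ)`, the expected number of linear factors with
multiplicity, where `ν(λ) = (1/q^d) ∏_j multichoose(M_j(q), m_j(λ))` is the splitting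
measure. -/
noncomputable def expectedRoots (q : ℚ) (d : ℕ) : ℚ :=
  ∑ l : Nat.Partition d,
    (l.parts.count 1 : ℚ) *
      ((1 / q ^ d) * ∏ j ∈ Finset.Icc 1 d, multichoose (necklace j q) (l.parts.count j))

namespace SplittingAux

/-- cast a partition along an equality of the total -/
def castParts {k k' : ℕ} (h : k = k') (m : Nat.Partition k) : Nat.Partition k' :=
  ⟨m.parts, m.parts_pos, h ▸ m.parts_sum⟩

@[simp] lemma castParts_parts {k k' : ℕ} (h : k = k') (m : Nat.Partition k) :
    (castParts h m).parts = m.parts := rfl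

/-- remove `c` parts of size `j` -/
def subParts {e : ℕ} (j c : ℕ) (l : Nat.Partition e) (h : c ≤ l.parts.count j) :
    Nat.Partition (e - j * c) where
  parts := l.parts - Multiset.replicate c j
  parts_pos := fun hi => l.parts_pos (Multiset.mem_of_le (Multiset.sub_le_self _ _) hi)
  parts_sum := by
    have hle : Multiset.replicate c j ≤ l.parts := Multiset.le_count_iff_replicate_le.mp h
    obtain ⟨u, hu⟩ := Multiset.le_iff_exists_add.mp hle
    have h2 : c * j + u.sum = e := by
      have := l.parts_sum
      rw [hu, Multiset.sum_add, Multiset.sum_replicate, smul_eq_mul] at this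
      exact this
    rw [hu, add_tsub_cancel_left, mul_comm j c]
    omega

@[simp] lemma subParts_parts {e : ℕ} (j c : ℕ) (l : Nat.Partition e) (h : c ≤ l.parts.count j) :
    (subParts j c l h).parts = l.parts - Multiset.replicate c j := rfl

/-- add `c` parts of size `j` -/
def addParts {k : ℕ} (j c : ℕ) (hj : 0 < j) (m : Nat.Partition k) : Nat.Partition (k + j * c) where
  parts := m.parts + Multiset.replicate c j
  parts_pos := fun hi => by
    rcases Multiset.mem_add.mp hi with h | h
    · exact m.parts_pos h
    · rw [Multiset.eq_of_mem_replicate h]; exact hj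
  parts_sum := by
    rw [Multiset.sum_add, m.parts_sum, Multiset.sum_replicate, smul_eq_mul, mul_comm]

/-- add `c` parts of size `j` to a partition of `e - j*c` -/
def fromPair {e j : ℕ} (hj : 0 < j) (c : ℕ) (hc : j * c ≤ e) (m : Nat.Partition (e - j * c)) :
    Nat.Partition e :=
  castParts (Nat.sub_add_cancel hc) (addParts j c hj m)

@[simp] lemma fromPair_parts {e j : ℕ} (hj : 0 < j) (c : ℕ) (hc : j * c ≤ e)
    (m : Nat.Partition (e - j * c)) :
    (fromPair hj c hc m).parts = m.parts + Multiset.replicate c j := rfl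

lemma partition_heq {e j : ℕ} {c c' : ℕ} (h : c = c') (m : Nat.Partition (e - j * c))
    (m' : Nat.Partition (e - j * c')) (hp : m.parts = m'.parts) : HEq m m' := by
  subst h
  exact heq_of_eq (Nat.Partition.ext hp)

end SplittingAux

namespace SplittingAux2
open SplittingAux

noncomputable def Uq (q : ℚ) (e : ℕ) : ℚ :=
  ∑ l : Nat.Partition e, ∏ i ∈ Finset.Icc 1 e, multichoose (necklace i q) (l.parts.count i)

lemma multichoose_zero' (x : ℚ) : multichoose x 0 = 1 := by simp [multichoose]

lemma mul_multichoose (x : ℚ) (m : ℕ) :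
    (m : ℚ) * multichoose x m = x * ∑ a ∈ Finset.range m, multichoose x a := by
  induction m with
  | zero => simp
  | succ m ih =>
    have hsucc : ((m : ℚ) + 1) * multichoose x (m + 1) = (x + m) * multichoose x m := by
      rw [multichoose, multichoose, ascPochhammer_succ_right]
      have h1 : ((m+1).factorial : ℚ) = (m.factorial : ℚ) * ((m:ℚ)+1) := by
        rw [Nat.factorial_succ]; push_cast; ring
    
      rw [h1]
      have h2 : (m.factorial : ℚ) ≠ 0 := by positivity
      field_simp
      simp only [Polynomial.eval_add, Polynomial.eval_mul, Polynomial.eval_X, Polynomial.eval_natCast]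
      ring
    rw [Finset.sum_range_succ, mul_add, ← ih]
    push_cast
    linarith [hsucc]

lemma count_eq_zero_of_gt {e : ℕ} (l : Nat.Partition e) {i : ℕ} (h : e < i) :
    l.parts.count i = 0 := by
  rw [Multiset.count_eq_zero]
  intro hi
  exact absurd (l.parts_sum ▸ Multiset.single_le_sum (fun _ _ => Nat.zero_le _) i hi)
    (Nat.not_le.mpr h)

lemma prod_ext (q : ℚ) {k e : ℕ} (hke : k ≤ e) (m : Nat.Partition k) :
    ∏ i ∈ Finset.Icc 1 e, multichoose (necklace i q) (m.parts.count i)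
      = ∏ i ∈ Finset.Icc 1 k, multichoose (necklace i q) (m.parts.count i) := by
  refine (Finset.prod_subset (Finset.Icc_subset_Icc_right hke) fun x hx hnx => ?_).symm
  have hk : k < x := by
    simp only [Finset.mem_Icc] at hx hnx
    omega
  rw [count_eq_zero_of_gt m hk, multichoose_zero']

lemma pointing (q : ℚ) {e j : ℕ} (hj : 1 ≤ j) (hje : j ≤ e) :
    (∑ l : Nat.Partition e, ((l.parts.count j : ℚ) *
        ∏ i ∈ Finset.Icc 1 e, multichoose (necklace i q) (l.parts.count i)))
      = necklace j q * ∑ c ∈ Finset.Icc 1 (e / j), Uq q (e - j * c) := by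
  have hmem : j ∈ Finset.Icc 1 e := Finset.mem_Icc.mpr ⟨hj, hje⟩
  have step1 : ∀ l : Nat.Partition e,
      (l.parts.count j : ℚ) * ∏ i ∈ Finset.Icc 1 e, multichoose (necklace i q) (l.parts.count i)
        = necklace j q * ∑ a ∈ Finset.range (l.parts.count j),
            (multichoose (necklace j q) a *
              ∏ i ∈ (Finset.Icc 1 e).erase j, multichoose (necklace i q) (l.parts.count i)) := by
    intro l
    rw [← Finset.mul_prod_erase _ (fun i => multichoose (necklace i q) (l.parts.count i)) hmem,
        ← mul_assoc, mul_multichoose, mul_assoc, Finset.sum_mul]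
  rw [Finset.sum_congr rfl fun l _ => step1 l, ← Finset.mul_sum]
  congr 1
  have hUq : ∀ c ∈ Finset.Icc 1 (e / j), Uq q (e - j * c)
      = ∑ m : Nat.Partition (e - j * c),
          ∏ i ∈ Finset.Icc 1 e, multichoose (necklace i q) (m.parts.count i) := by
    intro c _
    exact Finset.sum_congr rfl fun m _ => (prod_ext q (Nat.sub_le e _) m).symm
  rw [Finset.sum_congr rfl hUq]
  rw [Finset.sum_sigma' Finset.univ (fun l : Nat.Partition e => Finset.range (l.parts.count j)),
      Finset.sum_sigma' (Finset.Icc 1 (e / j))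
        (fun c => (Finset.univ : Finset (Nat.Partition (e - j * c))))]
  refine Finset.sum_bij'
    (fun (p : Σ _ : Nat.Partition e, ℕ) _ =>
      (⟨p.1.parts.count j - p.2, subParts j (p.1.parts.count j - p.2) p.1 (Nat.sub_le _ _)⟩ :
        Σ c : ℕ, Nat.Partition (e - j * c)))
    (fun b hb =>
      (⟨fromPair (by omega : 0 < j) b.1
          (by
            have h1 := (Finset.mem_Icc.mp (Finset.mem_sigma.mp hb).1).2
            rw [mul_comm]
            exact (Nat.le_div_iff_mul_le (by omega : 0 < j)).mp h1) b.2,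
        b.2.parts.count j⟩ : Σ _ : Nat.Partition e, ℕ))
    ?_ ?_ ?_ ?_ ?_
  · -- hi : maps into t
    rintro ⟨l, a⟩ hp
    have ha : a < l.parts.count j := Finset.mem_range.mp (Finset.mem_sigma.mp hp).2
    have hle : Multiset.replicate (l.parts.count j - a) j ≤ l.parts :=
      Multiset.le_count_iff_replicate_le.mp (Nat.sub_le _ _)
    obtain ⟨u, hu⟩ := Multiset.le_iff_exists_add.mp hle
    have hs := l.parts_sum
    rw [hu, Multiset.sum_add, Multiset.sum_replicate, smul_eq_mul] at hs
    have h1 : 1 ≤ l.parts.count j - a := by omega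
    have h2 : l.parts.count j - a ≤ e / j :=
      (Nat.le_div_iff_mul_le (by omega : 0 < j)).mpr (by omega)
    exact Finset.mem_sigma.mpr ⟨Finset.mem_Icc.mpr ⟨h1, h2⟩, Finset.mem_univ _⟩
  · -- hj : maps back into s
    rintro ⟨c, m⟩ hb
    have h1 : 1 ≤ c := (Finset.mem_Icc.mp (Finset.mem_sigma.mp hb).1).1
    have h2 : j * c ≤ e := by
      have h3 := (Finset.mem_Icc.mp (Finset.mem_sigma.mp hb).1).2
      rw [mul_comm]
      exact (Nat.le_div_iff_mul_le (by omega : 0 < j)).mp h3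
    refine Finset.mem_sigma.mpr ⟨Finset.mem_univ _, Finset.mem_range.mpr ?_⟩
    show m.parts.count j < ((fromPair (by omega : 0 < j) c h2 m).parts).count j
    simp [fromPair_parts, Multiset.count_add, Multiset.count_replicate]
    omega
  · -- left_inv
    rintro ⟨l, a⟩ hp
    have ha : a < l.parts.count j := Finset.mem_range.mp (Finset.mem_sigma.mp hp).2
    set c := l.parts.count j - a with hc
    have hle : Multiset.replicate c j ≤ l.parts :=
      Multiset.le_count_iff_replicate_le.mp (by omega)
    refine Sigma.ext ?_ ?_
    · apply Nat.Partition.ext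
      simp only [fromPair_parts, subParts_parts]
      exact tsub_add_cancel_of_le hle
    · apply heq_of_eq
      simp only [subParts_parts, Multiset.count_sub, Multiset.count_replicate, if_pos rfl,
        if_true, eq_self_iff_true]
      omega
  · -- right_inv
    rintro ⟨c, m⟩ hb
    have hkey : (m.parts + Multiset.replicate c j).count j - m.parts.count j = c := by
      simp [Multiset.count_add, Multiset.count_replicate]
    refine Sigma.ext ?_ ?_
    · simpa [fromPair_parts] using hkey
    · refine partition_heq ?_ _ _ ?_
      · simpa [fromPair_parts] using hkey
      · simp only [subParts_parts, fromPair_parts]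
        show (fromPair _ c _ m).parts - Multiset.replicate _ j = m.parts
        simp only [fromPair_parts, hkey]
        exact add_tsub_cancel_right _ _
  · -- values
    rintro ⟨l, a⟩ hp
    have ha : a < l.parts.count j := Finset.mem_range.mp (Finset.mem_sigma.mp hp).2
    set c := l.parts.count j - a with hc
    rw [← Finset.mul_prod_erase _ _ hmem]
    have hcj : (subParts j c l (Nat.sub_le _ _)).parts.count j = a := by
      simp only [subParts_parts, Multiset.count_sub, Multiset.count_replicate, if_pos rfl,
        if_true]
      omega
    rw [hcj]
    congr 1
    refine Finset.prod_congr rfl fun i hi => ?_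
    have hij : i ≠ j := (Finset.mem_erase.mp hi).1
    congr 1
    simp [subParts_parts, Multiset.count_sub, Multiset.count_replicate, hij, Ne.symm hij]

lemma necklace_moebius (q : ℚ) :
    ∀ n > 0, Finset.sum n.divisors (fun j : ℕ => (j : ℚ) * necklace j q) = q ^ n := by
  rw [ArithmeticFunction.sum_eq_iff_sum_mul_moebius_eq
    (f := fun j => (j : ℚ) * necklace j q) (g := fun n => q ^ n)]
  intro n hn
  rw [Nat.sum_divisorsAntidiagonal (fun a b => ((ArithmeticFunction.moebius a : ℤ) : ℚ) * q ^ b)]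
  rw [necklace, ← mul_assoc, mul_one_div, div_self (by positivity : (n:ℚ) ≠ 0), one_mul]

lemma sum_parts_count {e : ℕ} (l : Nat.Partition e) :
    ∑ i ∈ Finset.Icc 1 e, l.parts.count i * i = e := by
  have h0 : (l.parts.map id).sum = ∑ m ∈ l.parts.toFinset, l.parts.count m • id m :=
    Finset.sum_multiset_map_count l.parts id
  rw [Multiset.map_id] at h0
  have hsub : l.parts.toFinset ⊆ Finset.Icc 1 e := by
    intro x hx
    rw [Multiset.mem_toFinset] at hx
    refine Finset.mem_Icc.mpr ⟨l.parts_pos hx, ?_⟩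
    exact l.parts_sum ▸ Multiset.single_le_sum (fun _ _ => Nat.zero_le _) x hx
  calc ∑ i ∈ Finset.Icc 1 e, l.parts.count i * i
      = ∑ m ∈ l.parts.toFinset, l.parts.count m * m := by
        refine (Finset.sum_subset hsub fun x _ hnx => ?_).symm
        rw [Multiset.count_eq_zero_of_notMem (fun h => hnx (Multiset.mem_toFinset.mpr h))]
        simp
    _ = l.parts.sum := by
        rw [h0]
        exact Finset.sum_congr rfl fun m _ => by simp [smul_eq_mul]
    _ = e := l.parts_sum

lemma recurrence (q : ℚ) {e : ℕ} (he : 1 ≤ e) :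
    (e : ℚ) * Uq q e = ∑ k ∈ Finset.Icc 1 e, q ^ k * Uq q (e - k) := by
  have step : (e : ℚ) * Uq q e
      = ∑ i ∈ Finset.Icc 1 e, (i : ℚ) * ((necklace i q) * ∑ c ∈ Finset.Icc 1 (e / i), Uq q (e - i * c)) := by
    rw [Uq, Finset.mul_sum]
    have key : ∀ l : Nat.Partition e,
        (e : ℚ) * ∏ i ∈ Finset.Icc 1 e, multichoose (necklace i q) (l.parts.count i)
          = ∑ i ∈ Finset.Icc 1 e, (i : ℚ) * ((l.parts.count i : ℚ) *
              ∏ i' ∈ Finset.Icc 1 e, multichoose (necklace i' q) (l.parts.count i')) := by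
      intro l
      have hce : ((e : ℚ)) = ∑ i ∈ Finset.Icc 1 e, ((l.parts.count i : ℚ) * (i : ℚ)) := by
        calc (e : ℚ) = ((∑ i ∈ Finset.Icc 1 e, l.parts.count i * i : ℕ) : ℚ) := by
              rw [sum_parts_count l]
          _ = ∑ i ∈ Finset.Icc 1 e, ((l.parts.count i : ℚ) * (i : ℚ)) := by push_cast; rfl
      rw [hce, Finset.sum_mul]
      exact Finset.sum_congr rfl fun i _ => by ring
    rw [Finset.sum_congr rfl fun l _ => key l, Finset.sum_comm]
    refine Finset.sum_congr rfl fun i hi => ?_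
    rw [Finset.mem_Icc] at hi
    rw [← Finset.mul_sum, pointing q hi.1 hi.2]
  rw [step]
  have step2 : ∀ i ∈ Finset.Icc 1 e,
      (i : ℚ) * ((necklace i q) * ∑ c ∈ Finset.Icc 1 (e / i), Uq q (e - i * c))
        = ∑ c ∈ Finset.Icc 1 (e / i), ((i : ℚ) * necklace i q) * Uq q (e - i * c) := by
    intro i _
    rw [Finset.mul_sum, Finset.mul_sum]
    exact Finset.sum_congr rfl fun c _ => by ring
  rw [Finset.sum_congr rfl step2]
  have step3 : ∀ k ∈ Finset.Icc 1 e, q ^ k * Uq q (e - k)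
      = ∑ p ∈ k.divisorsAntidiagonal, ((p.1 : ℚ) * necklace p.1 q) * Uq q (e - k) := by
    intro k hk
    rw [Finset.mem_Icc] at hk
    rw [← Finset.sum_mul]
    congr 1
    rw [Nat.sum_divisorsAntidiagonal (fun a b => (a : ℚ) * necklace a q)]
    exact (necklace_moebius q k (by omega)).symm
  rw [Finset.sum_congr rfl step3]
  rw [Finset.sum_sigma' (Finset.Icc 1 e) (fun i => Finset.Icc 1 (e / i)),
      Finset.sum_sigma' (Finset.Icc 1 e) (fun k => k.divisorsAntidiagonal)]
  refine Finset.sum_bij'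
    (fun (p : Σ _ : ℕ, ℕ) _ => (⟨p.1 * p.2, (p.1, p.2)⟩ : Σ _ : ℕ, ℕ × ℕ))
    (fun (b : Σ _ : ℕ, ℕ × ℕ) _ => (⟨b.2.1, b.2.2⟩ : Σ _ : ℕ, ℕ))
    ?_ ?_ ?_ ?_ ?_
  · rintro ⟨i, c⟩ hp
    have hi1 : 1 ≤ i := (Finset.mem_Icc.mp (Finset.mem_sigma.mp hp).1).1
    have hi2 : i ≤ e := (Finset.mem_Icc.mp (Finset.mem_sigma.mp hp).1).2
    have hc1 : 1 ≤ c := (Finset.mem_Icc.mp (Finset.mem_sigma.mp hp).2).1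
    have hc2 : c ≤ e / i := (Finset.mem_Icc.mp (Finset.mem_sigma.mp hp).2).2
    have hic : i * c ≤ e := by
      have h4 := (Nat.le_div_iff_mul_le (by omega : 0 < i)).mp hc2
      calc i * c = c * i := mul_comm _ _
        _ ≤ e := h4
    have hpos : 0 < i * c := Nat.mul_pos (by omega) (by omega)
    exact Finset.mem_sigma.mpr ⟨Finset.mem_Icc.mpr ⟨hpos, hic⟩,
      Nat.mem_divisorsAntidiagonal.mpr ⟨rfl, hpos.ne'⟩⟩
  · rintro ⟨k, a, c⟩ hb
    have hk2 : k ≤ e := (Finset.mem_Icc.mp (Finset.mem_sigma.mp hb).1).2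
    have hp : (a, c) ∈ k.divisorsAntidiagonal := (Finset.mem_sigma.mp hb).2
    obtain ⟨hac, hk0⟩ := Nat.mem_divisorsAntidiagonal.mp hp
    simp only at hac
    have ha : 0 < a := by
      rcases Nat.eq_zero_or_pos a with rfl | h
      · simp at hac; omega
      · exact h
    have hc : 0 < c := by
      rcases Nat.eq_zero_or_pos c with rfl | h
      · simp at hac; omega
      · exact h
    have hae : a ≤ e := by
      have : a ≤ a * c := Nat.le_mul_of_pos_right a hc
      omega
    have hcd : c ≤ e / a := by
      refine (Nat.le_div_iff_mul_le ha).mpr ?_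
      calc c * a = a * c := mul_comm _ _
        _ ≤ e := by omega
    exact Finset.mem_sigma.mpr ⟨Finset.mem_Icc.mpr ⟨ha, hae⟩, Finset.mem_Icc.mpr ⟨hc, hcd⟩⟩
  · rintro ⟨i, c⟩ _
    rfl
  · rintro ⟨k, a, c⟩ hb
    have hp : (a, c) ∈ k.divisorsAntidiagonal := (Finset.mem_sigma.mp hb).2
    obtain ⟨hac, _⟩ := Nat.mem_divisorsAntidiagonal.mp hp
    simp only at hac
    exact Sigma.ext hac (heq_of_eq rfl)
  · rintro ⟨i, c⟩ _
    rfl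

lemma necklace_one (q : ℚ) : necklace 1 q = q := by
  simp [necklace]

lemma Uq_zero (q : ℚ) : Uq q 0 = 1 := by
  simp [Uq]

lemma Uq_eq (q : ℚ) (e : ℕ) : Uq q e = q ^ e := by
  induction e using Nat.strong_induction_on with
  | _ e ih =>
    rcases Nat.eq_zero_or_pos e with rfl | he
    · simp [Uq_zero]
    · have hrec := recurrence q he
      have hsum : ∑ k ∈ Finset.Icc 1 e, q ^ k * Uq q (e - k) = ∑ _k ∈ Finset.Icc 1 e, q ^ e := by
        refine Finset.sum_congr rfl fun k hk => ?_
        rw [Finset.mem_Icc] at hk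
        rw [ih (e - k) (by omega), ← pow_add]
        congr 1
        omega
      rw [hsum, Finset.sum_const, Nat.card_Icc] at hrec
      have he' : (e : ℚ) ≠ 0 := by positivity
      have : (e + 1 - 1 : ℕ) = e := by omega
      rw [this, nsmul_eq_mul] at hrec
      exact mul_left_cancel₀ he' hrec

end SplittingAux2


namespace SplittingAux2

lemma expectedRoots_eq (q : ℚ) (hq : 1 < q) {d : ℕ} (hd : 0 < d) :
    expectedRoots q d = (1 - (q ^ d)⁻¹) / (1 - q⁻¹) := by
  have hq0 : q ≠ 0 := by positivity
  have hq1 : q - 1 ≠ 0 := by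
    intro h
    have : q = 1 := by linarith
    linarith
  have hqd : (q : ℚ) ^ d ≠ 0 := by positivity
  have h1 : expectedRoots q d = (1 / q ^ d) *
      ∑ l : Nat.Partition d, ((l.parts.count 1 : ℚ) *
        ∏ j ∈ Finset.Icc 1 d, multichoose (necklace j q) (l.parts.count j)) := by
    rw [expectedRoots, Finset.mul_sum]
    exact Finset.sum_congr rfl fun l _ => by ring
  rw [h1, pointing q le_rfl hd, necklace_one]
  have h2 : ∑ c ∈ Finset.Icc 1 (d / 1), Uq q (d - 1 * c) = ∑ i ∈ Finset.range d, q ^ i := by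
    rw [Nat.div_one]
    refine Finset.sum_bij' (fun c _ => d - c) (fun i _ => d - i) ?_ ?_ ?_ ?_ ?_
    · intro c hc
      rw [Finset.mem_Icc] at hc
      refine Finset.mem_range.mpr ?_
      show d - c < d
      omega
    · intro i hi
      rw [Finset.mem_range] at hi
      refine Finset.mem_Icc.mpr ?_
      show 1 ≤ d - i ∧ d - i ≤ d
      omega
    · intro c hc
      rw [Finset.mem_Icc] at hc
      show d - (d - c) = c
      omega
    · intro i hi
      rw [Finset.mem_range] at hi
      show d - (d - i) = i
      omega
    · intro c _
      rw [one_mul, Uq_eq]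
  rw [h2, geom_sum_eq (by intro h; rw [h] at hq; exact lt_irrefl 1 hq) d]
  field_simp

end SplittingAux2

/-- The generating function identity `∑_{d ≥ 1} E_d(R) t^d = (t/(1 - t/q)) ⋅ (1/(1 - t))`,
and consequently `E_d(R) = (1 - q^{-d})/(1 - q^{-1})`. -/
theorem expected_roots_generating_function (q : ℚ) (hq : 1 < q) :
    (PowerSeries.mk fun d => if d = 0 then 0 else expectedRoots q d)
        = PowerSeries.X * (1 - PowerSeries.C q⁻¹ * PowerSeries.X)⁻¹ *
            (1 - PowerSeries.X)⁻¹
      ∧ ∀ d : ℕ, 0 < d → expectedRoots q d = (1 - (q ^ d)⁻¹) / (1 - q⁻¹) := by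
  have hq0 : q ≠ 0 := by positivity
  have hq1 : q ≠ 1 := fun h => by rw [h] at hq; exact lt_irrefl 1 hq
  have hqi1 : q⁻¹ ≠ 1 := fun h => by
    have : q = 1 := by field_simp at h; simpa using h.symm
    exact hq1 this
  have part2 : ∀ d : ℕ, 0 < d → expectedRoots q d = (1 - (q ^ d)⁻¹) / (1 - q⁻¹) :=
    fun d hd => SplittingAux2.expectedRoots_eq q hq hd
  refine ⟨?_, part2⟩
  -- geometric series inverses
  have keyA : (PowerSeries.mk fun n => (q⁻¹ : ℚ) ^ n) * (1 - PowerSeries.C q⁻¹ * PowerSeries.X) = 1 := by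
    ext n
    rw [mul_sub, mul_one, map_sub]
    cases n with
    | zero => simp
    | succ n =>
      rw [show (PowerSeries.mk fun n => (q⁻¹ : ℚ) ^ n) * (PowerSeries.C q⁻¹ * PowerSeries.X)
            = PowerSeries.C q⁻¹ * ((PowerSeries.mk fun n => (q⁻¹ : ℚ) ^ n) * PowerSeries.X) by ring]
      rw [PowerSeries.coeff_C_mul, PowerSeries.coeff_succ_mul_X, PowerSeries.coeff_mk,
        PowerSeries.coeff_mk, PowerSeries.coeff_one]
      simp [pow_succ, mul_comm]
  have keyB : (PowerSeries.mk fun _ : ℕ => (1 : ℚ)) * (1 - PowerSeries.X) = 1 := by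
    ext n
    rw [mul_sub, mul_one, map_sub]
    cases n with
    | zero => simp
    | succ n =>
      rw [PowerSeries.coeff_succ_mul_X, PowerSeries.coeff_mk, PowerSeries.coeff_mk,
        PowerSeries.coeff_one]
      simp
  have hcA : PowerSeries.constantCoeff (1 - PowerSeries.C q⁻¹ * PowerSeries.X) ≠ 0 := by
    simp
  have hcB : PowerSeries.constantCoeff (1 - PowerSeries.X : PowerSeries ℚ) ≠ 0 := by
    simp
  have hA : (1 - PowerSeries.C q⁻¹ * PowerSeries.X)⁻¹ = PowerSeries.mk fun n => (q⁻¹ : ℚ) ^ n :=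
    ((PowerSeries.eq_inv_iff_mul_eq_one hcA).mpr keyA).symm
  have hB : (1 - PowerSeries.X : PowerSeries ℚ)⁻¹ = PowerSeries.mk fun _ : ℕ => (1 : ℚ) :=
    ((PowerSeries.eq_inv_iff_mul_eq_one hcB).mpr keyB).symm
  rw [hA, hB, mul_assoc]
  ext n
  cases n with
  | zero => simp
  | succ n =>
    rw [PowerSeries.coeff_succ_X_mul, PowerSeries.coeff_mk, PowerSeries.coeff_mul]
    rw [if_neg (Nat.succ_ne_zero n), part2 (n + 1) (Nat.succ_pos n)]
    simp only [PowerSeries.coeff_mk, mul_one]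
    rw [Finset.Nat.sum_antidiagonal_eq_sum_range_succ_mk]
    simp only []
    rw [geom_sum_eq hqi1 (n + 1)]
    rw [inv_pow]
    have h1 : (1 : ℚ) - q⁻¹ ≠ 0 := fun h => hqi1 (by linarith)
    have h2 : (q⁻¹ : ℚ) - 1 ≠ 0 := fun h => hqi1 (by linarith)
    rw [show (1 : ℚ) - (q ^ (n + 1))⁻¹ = -((q ^ (n + 1))⁻¹ - 1) by ring,
        show (1 : ℚ) - q⁻¹ = -(q⁻¹ - 1) by ring, neg_div_neg_eq]
end
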